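/- arXiv:1009.3526 — 11 statements merged into one kernel-verified Lean document; each statement's English description precedes it below -/
import Mathlib

section
/- Mild chain rule (Example 2; the deterministic case of the paper's mild Itô formula). In the deterministic mild-process setting, let V be a separable real Hilbert space and let φ : Ȟ → V be twice continuously Fréchet differentiable. Then for all t₀, t ∈ I with t₀ < t the function (t₀,t) ∋ s ↦ φ'(S_{s,t} x_s)(S_{s,t} y_s) ∈ V is Bochner integrable and φ(x_t) = φ(S_{t₀,t} x_{t₀}) + ∫_{t₀}^{t} φ'(S_{s,t} x_s)(S_{s,t} y_s) ds. (All evaluations are well defined since x_s ∈ Ȟ for s > τ and S_{s,t} maps Ĥ into Ȟ.) -/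
open Filter Topology


open MeasureTheory Set

set_option synthInstance.maxHeartbeats 1000000 in
lemma ftc_comp_aux {E V : Type*} [NormedAddCommGroup E] [NormedSpace ℝ E] [CompleteSpace E]
    [NormedAddCommGroup V] [NormedSpace ℝ V] [CompleteSpace V]
    (f : ℝ → E) (hf : Integrable f) (φ : E → V) (hφ : ContDiff ℝ 2 φ)
    (c : E) (a b : ℝ) (hab : a ≤ b) :
    IntegrableOn (fun s => fderiv ℝ φ (c + ∫ x in a..s, f x) (f s)) (Ioo a b) ∧
      φ (c + ∫ x in a..b, f x) =
        φ c + ∫ s in Ioo a b, fderiv ℝ φ (c + ∫ x in a..s, f x) (f s) := by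
  set F : ℝ → E := fun s => c + ∫ x in a..s, f x with hF
  have hFc : Continuous F := continuous_const.add (hf.continuous_primitive a)
  have hφ' : Continuous (fderiv ℝ φ) := hφ.continuous_fderiv two_ne_zero
  have hφc : Continuous φ := hφ.continuous
  have hK : IsCompact (F '' Icc a b) := isCompact_Icc.image hFc
  obtain ⟨C, hC⟩ := hK.exists_bound_of_continuousOn hφ'.continuousOn
  set M := C + 1 with hM
  have hM0 : 0 < M := by
    have := hC (F a) ⟨a, ⟨le_rfl, hab⟩, rfl⟩
    have := norm_nonneg (fderiv ℝ φ (F a))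
    linarith
  have hUopen : IsOpen {z : E | ‖fderiv ℝ φ z‖ < M} :=
    isOpen_lt (continuous_norm.comp hφ') continuous_const
  have hKU : F '' Icc a b ⊆ {z : E | ‖fderiv ℝ φ z‖ < M} := by
    rintro z hz; have := hC z hz; simp only [mem_setOf_eq]; linarith
  obtain ⟨δ, hδ0, hδ⟩ := hK.exists_thickening_subset_open hUopen hKU
  have hMnear : ∀ z : E, ∀ s ∈ Icc a b, ‖z - F s‖ < δ → ‖fderiv ℝ φ z‖ ≤ M := by
    intro z s hs hzs
    have : z ∈ Metric.thickening δ (F '' Icc a b) :=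
      Metric.mem_thickening_iff.2 ⟨F s, ⟨s, hs, rfl⟩, by rwa [dist_eq_norm]⟩
    exact (hδ this).le
  have hMF : ∀ s ∈ Icc a b, ‖fderiv ℝ φ (F s)‖ ≤ M := fun s hs =>
    hMnear (F s) s hs (by simpa using hδ0)
  -- approximation sequence
  set ε : ℕ → ℝ := fun n => δ / 2 * (1 / ((n : ℝ) + 1)) with hε
  have hεpos : ∀ n, 0 < ε n := fun n => by positivity
  have hεδ : ∀ n, ε n < δ := by
    intro n
    have h1 : (1 : ℝ) / ((n : ℝ) + 1) ≤ 1 := by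
      rw [div_le_one (by positivity)]; simp
    calc ε n ≤ δ / 2 * 1 := by
          apply mul_le_mul_of_nonneg_left h1 (by linarith)
      _ < δ := by linarith
  have hεlim : Tendsto ε atTop (𝓝 0) := by
    rw [hε]
    have := tendsto_one_div_add_atTop_nhds_zero_nat.const_mul (δ / 2)
    simpa [one_div] using this
  have hg : ∀ n : ℕ, ∃ g : ℝ → E, Continuous g ∧ Integrable g ∧
      (∫ x, ‖f x - g x‖) ≤ ε n := by
    intro n
    obtain ⟨g, -, hle, hcont, hint⟩ :=
      hf.exists_hasCompactSupport_integral_sub_le (hεpos n)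
    exact ⟨g, hcont, hint, hle⟩
  choose g hgc hgi hgl using hg
  set G : ℕ → ℝ → E := fun n s => c + ∫ x in a..s, g n x with hG
  have hGc : ∀ n, Continuous (G n) := fun n =>
    continuous_const.add ((hgi n).continuous_primitive a)
  -- uniform closeness
  have hGF : ∀ n, ∀ s ∈ Icc a b, ‖G n s - F s‖ ≤ ε n := by
    intro n s hs
    have h1 : G n s - F s = ∫ x in a..s, (g n x - f x) := by
      rw [intervalIntegral.integral_sub ((hgi n).intervalIntegrable) hf.intervalIntegrable]
      simp only [hG, hF]
      abel
    rw [h1]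
    have h2 : ‖∫ x in a..s, (g n x - f x)‖ ≤ ∫ x in a..s, ‖g n x - f x‖ :=
      intervalIntegral.norm_integral_le_integral_norm hs.1
    refine h2.trans ?_
    rw [intervalIntegral.integral_of_le hs.1]
    have h3 : ∫ x in Ioc a s, ‖g n x - f x‖ ≤ ∫ x, ‖g n x - f x‖ :=
      setIntegral_le_integral ((hgi n).sub hf).norm (ae_of_all _ fun x => norm_nonneg _)
    refine h3.trans ?_
    have h4 : (∫ x, ‖g n x - f x‖) = ∫ x, ‖f x - g n x‖ := by
      congr 1; ext x; rw [norm_sub_rev]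
    rw [h4]; exact hgl n
  have hGFt : ∀ s ∈ Icc a b, Tendsto (fun n => G n s) atTop (𝓝 (F s)) := by
    intro s hs
    rw [tendsto_iff_norm_sub_tendsto_zero]
    exact squeeze_zero (fun n => norm_nonneg _) (fun n => hGF n s hs) hεlim
  -- FTC for each approximation
  have hFTC : ∀ n, (∫ s in a..b, fderiv ℝ φ (G n s) (g n s)) = φ (G n b) - φ (G n a) := by
    intro n
    have hderiv : ∀ s : ℝ, HasDerivAt (G n) (g n s) s := by
      intro s
      exact (intervalIntegral.integral_hasDerivAt_right ((hgi n).intervalIntegrable)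
        ((hgc n).stronglyMeasurableAtFilter _ _) (hgc n).continuousAt).const_add c
    have hcomp : ∀ s : ℝ, HasDerivAt (fun u => φ (G n u))
        (fderiv ℝ φ (G n s) (g n s)) s := fun s =>
      ((hφ.differentiable two_ne_zero (G n s)).hasFDerivAt).comp_hasDerivAt s (hderiv s)
    exact intervalIntegral.integral_eq_sub_of_hasDerivAt (fun s _ => hcomp s)
      (((hφ'.comp (hGc n)).clm_apply (hgc n)).intervalIntegrable a b)
  -- the limit integrand
  set ψ : ℝ → V := fun s => fderiv ℝ φ (F s) (f s) with hψ
  have meas_pair : ∀ (A : ℝ → E →L[ℝ] V), Continuous A →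
      AEStronglyMeasurable (fun s => A s (f s)) (volume.restrict (Ioc a b)) := by
    intro A hA
    exact (isBoundedBilinearMap_apply (𝕜 := ℝ) (E := E) (F := V)).continuous.comp_aestronglyMeasurable
      ((hA.aestronglyMeasurable).prodMk hf.aestronglyMeasurable.restrict)
  have hGbd : ∀ n, ∀ s ∈ Icc a b, ‖fderiv ℝ φ (G n s)‖ ≤ M := by
    intro n s hs
    exact hMnear (G n s) s hs (lt_of_le_of_lt (hGF n s hs) (hεδ n))
  have hbound_int : Integrable (fun s => M * ‖f s‖) (volume.restrict (Ioc a b)) :=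
    (hf.norm.const_mul M).integrableOn
  have hψint : IntegrableOn ψ (Ioc a b) := by
    refine Integrable.mono' hbound_int (meas_pair _ (hφ'.comp hFc)) ?_
    refine (ae_restrict_iff' measurableSet_Ioc).2 (ae_of_all _ fun s hs => ?_)
    calc ‖fderiv ℝ φ (F s) (f s)‖ ≤ ‖fderiv ℝ φ (F s)‖ * ‖f s‖ :=
          ContinuousLinearMap.le_opNorm _ _
      _ ≤ M * ‖f s‖ := by
          apply mul_le_mul_of_nonneg_right (hMF s ⟨hs.1.le, hs.2⟩) (norm_nonneg _)
  have hψnint : ∀ n, IntegrableOn (fun s => fderiv ℝ φ (G n s) (f s)) (Ioc a b) := by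
    intro n
    refine Integrable.mono' hbound_int (meas_pair _ (hφ'.comp (hGc n))) ?_
    refine (ae_restrict_iff' measurableSet_Ioc).2 (ae_of_all _ fun s hs => ?_)
    calc ‖fderiv ℝ φ (G n s) (f s)‖ ≤ ‖fderiv ℝ φ (G n s)‖ * ‖f s‖ :=
          ContinuousLinearMap.le_opNorm _ _
      _ ≤ M * ‖f s‖ := by
          apply mul_le_mul_of_nonneg_right (hGbd n s ⟨hs.1.le, hs.2⟩) (norm_nonneg _)
  -- dominated convergence
  have hDCT : Tendsto (fun n => ∫ s in Ioc a b, fderiv ℝ φ (G n s) (f s)) atTop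
      (𝓝 (∫ s in Ioc a b, ψ s)) := by
    refine tendsto_integral_of_dominated_convergence (fun s => M * ‖f s‖)
      (fun n => meas_pair _ (hφ'.comp (hGc n))) hbound_int ?_ ?_
    · intro n
      refine (ae_restrict_iff' measurableSet_Ioc).2 (ae_of_all _ fun s hs => ?_)
      calc ‖fderiv ℝ φ (G n s) (f s)‖ ≤ ‖fderiv ℝ φ (G n s)‖ * ‖f s‖ :=
            ContinuousLinearMap.le_opNorm _ _
        _ ≤ M * ‖f s‖ := by
            apply mul_le_mul_of_nonneg_right (hGbd n s ⟨hs.1.le, hs.2⟩) (norm_nonneg _)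
    · refine (ae_restrict_iff' measurableSet_Ioc).2 (ae_of_all _ fun s hs => ?_)
      have h1 : Tendsto (fun n => fderiv ℝ φ (G n s)) atTop (𝓝 (fderiv ℝ φ (F s))) :=
        (hφ'.tendsto (F s)).comp (hGFt s ⟨hs.1.le, hs.2⟩)
      exact ((ContinuousLinearMap.apply ℝ V (f s)).continuous.tendsto _).comp h1
  -- difference of integrals
  have hdiff : ∀ n, ‖(∫ s in Ioc a b, fderiv ℝ φ (G n s) (g n s)) -
      ∫ s in Ioc a b, fderiv ℝ φ (G n s) (f s)‖ ≤ M * ε n := by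
    intro n
    have hint1 : IntegrableOn (fun s => fderiv ℝ φ (G n s) (g n s)) (Ioc a b) :=
      (((hφ'.comp (hGc n)).clm_apply (hgc n)).integrableOn_Icc (a := a) (b := b)).mono_set
        Ioc_subset_Icc_self
    rw [← integral_sub hint1 (hψnint n)]
    have hb1 : ∀ s ∈ Ioc a b, ‖fderiv ℝ φ (G n s) (g n s) - fderiv ℝ φ (G n s) (f s)‖
        ≤ M * ‖g n s - f s‖ := by
      intro s hs
      rw [← ContinuousLinearMap.map_sub]
      calc ‖fderiv ℝ φ (G n s) (g n s - f s)‖ ≤ ‖fderiv ℝ φ (G n s)‖ * ‖g n s - f s‖ :=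
            ContinuousLinearMap.le_opNorm _ _
        _ ≤ M * ‖g n s - f s‖ := by
            apply mul_le_mul_of_nonneg_right (hGbd n s ⟨hs.1.le, hs.2⟩) (norm_nonneg _)
    have hgint : Integrable (fun s => M * ‖g n s - f s‖) (volume.restrict (Ioc a b)) :=
      (((hgi n).sub hf).norm.const_mul M).integrableOn
    have h2 : ‖∫ s in Ioc a b, (fderiv ℝ φ (G n s) (g n s) - fderiv ℝ φ (G n s) (f s))‖
        ≤ ∫ s in Ioc a b, M * ‖g n s - f s‖ := by
      refine norm_integral_le_of_norm_le hgint ?_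
      exact (ae_restrict_iff' measurableSet_Ioc).2 (ae_of_all _ hb1)
    refine h2.trans ?_
    have h3 : (∫ s in Ioc a b, M * ‖g n s - f s‖) ≤ ∫ s, M * ‖g n s - f s‖ :=
      setIntegral_le_integral (((hgi n).sub hf).norm.const_mul M)
        (ae_of_all _ fun s => by positivity)
    refine h3.trans ?_
    rw [integral_const_mul]
    have h4 : (∫ s, ‖g n s - f s‖) = ∫ s, ‖f s - g n s‖ := by
      congr 1; ext s; rw [norm_sub_rev]
    rw [h4]
    exact mul_le_mul_of_nonneg_left (hgl n) hM0.le
  -- combine limits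
  have hIoc : Tendsto (fun n => ∫ s in Ioc a b, fderiv ℝ φ (G n s) (g n s)) atTop
      (𝓝 (∫ s in Ioc a b, ψ s)) := by
    have hzero : Tendsto (fun n => (∫ s in Ioc a b, fderiv ℝ φ (G n s) (g n s)) -
        ∫ s in Ioc a b, fderiv ℝ φ (G n s) (f s)) atTop (𝓝 0) := by
      refine squeeze_zero_norm hdiff ?_
      have h := hεlim.const_mul M
      rw [mul_zero] at h
      exact h
    have := hzero.add hDCT
    simpa using this
  have hlhsTendsto : Tendsto (fun n => φ (G n b) - φ (G n a)) atTop
      (𝓝 (φ (F b) - φ c)) := by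
    have hb' : Tendsto (fun n => φ (G n b)) atTop (𝓝 (φ (F b))) :=
      (hφc.tendsto (F b)).comp (hGFt b ⟨hab, le_rfl⟩)
    have ha' : ∀ n, G n a = c := fun n => by simp [hG]
    have ha'' : Tendsto (fun n => φ (G n a)) atTop (𝓝 (φ c)) := by
      simp only [ha']; exact tendsto_const_nhds
    exact hb'.sub ha''
  have hkey : φ (F b) - φ c = ∫ s in Ioc a b, ψ s := by
    refine tendsto_nhds_unique ?_ hIoc
    have : (fun n => φ (G n b) - φ (G n a)) =
        fun n => ∫ s in Ioc a b, fderiv ℝ φ (G n s) (g n s) := by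
      funext n
      rw [← hFTC n, intervalIntegral.integral_of_le hab]
    rw [← this]; exact hlhsTendsto
  constructor
  · exact (hψint.mono_set Ioo_subset_Ioc_self)
  · rw [show (∫ s in Ioo a b, fderiv ℝ φ (c + ∫ x in a..s, f x) (f s)) =
        ∫ s in Ioo a b, ψ s from rfl, ← integral_Ioc_eq_integral_Ioo, ← hkey]
    abel


/-- **Mild chain rule** (Example 2; the deterministic case of the mild Itô formula).
In the deterministic mild-process setting, for a twice continuously Fréchet differentiable
`φ : Ȟ → V` and `t₀ < t` in `I`, the function `s ↦ φ'(S_{s,t} x_s)(S_{s,t} y_s)` is Bochner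
integrable on `(t₀, t)` and
`φ(x_t) = φ(S_{t₀,t} x_{t₀}) + ∫_{t₀}^{t} φ'(S_{s,t} x_s)(S_{s,t} y_s) ds`. -/
theorem mild_chain_rule
    {Hv Ht Hh V : Type*}
    [NormedAddCommGroup Hv] [InnerProductSpace ℝ Hv] [CompleteSpace Hv]
    [SecondCountableTopology Hv] [MeasurableSpace Hv] [BorelSpace Hv]
    [NormedAddCommGroup Ht] [InnerProductSpace ℝ Ht] [CompleteSpace Ht]
    [SecondCountableTopology Ht] [MeasurableSpace Ht] [BorelSpace Ht]
    [NormedAddCommGroup Hh] [InnerProductSpace ℝ Hh] [CompleteSpace Hh]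
    [SecondCountableTopology Hh] [MeasurableSpace Hh] [BorelSpace Hh]
    [NormedAddCommGroup V] [InnerProductSpace ℝ V] [CompleteSpace V]
    [SecondCountableTopology V]
    -- the time set `I ⊆ [0,∞)`, closed and convex with nonempty interior, and `τ = inf I`
    (I : Set ℝ) (hI0 : I ⊆ Ici (0 : ℝ)) (hIclosed : IsClosed I)
    (hIconv : Convex ℝ I) (hIint : (interior I).Nonempty)
    (τ : ℝ) (hτ : IsGLB I τ)
    -- continuous dense embeddings `Ȟ ⊆ H̃ ⊆ Ĥ`
    (e₁ : Hv →L[ℝ] Ht) (he₁ : Function.Injective e₁) (he₁d : DenseRange e₁)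
    (e₂ : Ht →L[ℝ] Hh) (he₂ : Function.Injective e₂) (he₂d : DenseRange e₂)
    -- the semigroup `S`
    (S : ℝ → ℝ → (Hh →L[ℝ] Hv))
    (hS_comp : ∀ t₁ t₂ t₃, t₁ ∈ I → t₂ ∈ I → t₃ ∈ I → t₁ < t₂ → t₂ < t₃ →
      ∀ v : Hh, S t₂ t₃ (e₂ (e₁ (S t₁ t₂ v))) = S t₁ t₃ v)
    (hS_meas : ∀ v : Hh, Measurable fun p : ℝ × ℝ => S p.1 p.2 v)
    -- the mild process `x` with mild drift `y`; `xv t` realizes `x t ∈ Ȟ` for `t > τ`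
    (x : ℝ → Ht) (hx : Measurable x)
    (y : ℝ → Hh) (hy : Measurable y)
    (xv : ℝ → Hv) (hxv : ∀ t ∈ I, τ < t → e₁ (xv t) = x t)
    (hInt : ∀ t ∈ I, IntegrableOn (fun s => S s t (y s)) (Ioo τ t))
    (hMild : ∀ t ∈ I, τ < t →
      xv t = S τ t (e₂ (x τ)) + ∫ s in Ioo τ t, S s t (y s))
    -- the test function
    (φ : Hv → V) (hφ : ContDiff ℝ 2 φ)
    (t₀ t : ℝ) (ht₀ : t₀ ∈ I) (ht : t ∈ I) (hlt : t₀ < t) :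
    IntegrableOn (fun s => fderiv ℝ φ (S s t (e₂ (x s))) (S s t (y s))) (Ioo t₀ t) ∧
    φ (xv t) =
      φ (S t₀ t (e₂ (x t₀))) +
        ∫ s in Ioo t₀ t, fderiv ℝ φ (S s t (e₂ (x s))) (S s t (y s)) := by
  have hIne : I.Nonempty := ⟨t, ht⟩
  have hτI : τ ∈ I := hτ.mem_of_isClosed hIne hIclosed
  have hτt₀ : τ ≤ t₀ := hτ.1 ht₀
  have hτt : τ < t := lt_of_le_of_lt hτt₀ hlt
  have hIcc : Icc τ t ⊆ I := hIconv.ordConnected.out hτI ht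
  -- the semigroup-pushed formula for `S s t (e₂ (x s))`
  have key : ∀ s, τ < s → s < t →
      S s t (e₂ (x s)) = S τ t (e₂ (x τ)) + ∫ r in Ioo τ s, S r t (y r) := by
    intro s hτs hst
    have hsI : s ∈ I := hIcc ⟨hτs.le, hst.le⟩
    have hxs : e₁ (xv s) = x s := hxv s hsI hτs
    set L : Hv →L[ℝ] Hv := (S s t).comp (e₂.comp e₁) with hL
    have h1 : S s t (e₂ (x s)) = L (xv s) := by rw [← hxs]; rfl
    rw [h1, hMild s hsI hτs, map_add]
    congr 1
    · exact hS_comp τ s t hτI hsI ht hτs hst (e₂ (x τ))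
    · rw [← ContinuousLinearMap.integral_comp_comm L (hInt s hsI)]
      refine setIntegral_congr_fun measurableSet_Ioo fun r hr => ?_
      exact hS_comp r s t (hIcc ⟨hr.1.le, (hr.2.trans hst).le⟩) hsI ht hr.2 hst (y r)
  have hxt : xv t = S τ t (e₂ (x τ)) + ∫ r in Ioo τ t, S r t (y r) := hMild t ht hτt
  -- the indicator drift
  set fI : ℝ → Hv := (Ioo t₀ t).indicator (fun r => S r t (y r)) with hfI
  have hfset : IntegrableOn (fun r => S r t (y r)) (Ioo t₀ t) :=
    (hInt t ht).mono_set (Ioo_subset_Ioo_left hτt₀)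
  have hfi : Integrable fI := hfset.integrable_indicator measurableSet_Ioo
  set c : Hv := S t₀ t (e₂ (x t₀)) with hcdef
  have hc : c = S τ t (e₂ (x τ)) + ∫ r in Ioo τ t₀, S r t (y r) := by
    rcases eq_or_lt_of_le hτt₀ with h | h
    · rw [← h]; simp [hcdef, ← h]
    · exact key t₀ h hlt
  -- splitting the integral
  have split : ∀ s, t₀ < s → s ≤ t →
      (∫ r in Ioo τ s, S r t (y r)) =
        (∫ r in Ioo τ t₀, S r t (y r)) + ∫ r in Ioo t₀ s, S r t (y r) := by
    intro s ht₀s hst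
    rcases eq_or_lt_of_le hτt₀ with h | h
    · rw [← h]; simp
    · have hsplit : Ioo τ t₀ ∪ Ico t₀ s = Ioo τ s := Ioo_union_Ico_eq_Ioo h ht₀s.le
      have hdisj : Disjoint (Ioo τ t₀) (Ico t₀ s) :=
        Set.disjoint_left.2 fun r hr hr' => absurd hr'.1 (not_le.2 hr.2)
      have hi1 : IntegrableOn (fun r => S r t (y r)) (Ioo τ t₀) :=
        (hInt t ht).mono_set (Ioo_subset_Ioo_right hlt.le)
      have hi2 : IntegrableOn (fun r => S r t (y r)) (Ico t₀ s) :=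
        ((hInt t ht).mono_set (Ioo_subset_Ioo hτt₀ hst)).congr_set_ae Ioo_ae_eq_Ico.symm
      rw [← hsplit, setIntegral_union hdisj measurableSet_Ico hi1 hi2,
        integral_Ico_eq_integral_Ioo]
  -- the primitive of the indicator drift agrees with the pushed process
  have hFval : ∀ s, t₀ < s → s ≤ t →
      (c + ∫ r in t₀..s, fI r) = S τ t (e₂ (x τ)) + ∫ r in Ioo τ s, S r t (y r) := by
    intro s ht₀s hst
    have h1 : (∫ r in t₀..s, fI r) = ∫ r in Ioo t₀ s, fI r := by
      rw [intervalIntegral.integral_of_le ht₀s.le, integral_Ioc_eq_integral_Ioo]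
    have h2 : (∫ r in Ioo t₀ s, fI r) = ∫ r in Ioo t₀ s, S r t (y r) := by
      refine setIntegral_congr_fun measurableSet_Ioo fun r hr => ?_
      simp only [hfI]
      exact Set.indicator_of_mem (show r ∈ Ioo t₀ t from ⟨hr.1, lt_of_lt_of_le hr.2 hst⟩) _
    rw [h1, h2, hc, split s ht₀s hst, add_assoc]
  -- apply the abstract FTC
  obtain ⟨hint, heq⟩ := ftc_comp_aux fI hfi φ hφ c t₀ t hlt.le
  have hEq : ∀ s ∈ Ioo t₀ t,
      fderiv ℝ φ (c + ∫ r in t₀..s, fI r) (fI s) =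
        fderiv ℝ φ (S s t (e₂ (x s))) (S s t (y s)) := by
    intro s hs
    have h1 : c + ∫ r in t₀..s, fI r = S s t (e₂ (x s)) := by
      rw [hFval s hs.1 hs.2.le, ← key s (lt_of_le_of_lt hτt₀ hs.1) hs.2]
    rw [h1, hfI, Set.indicator_of_mem hs]
  have hxvt : c + ∫ r in t₀..t, fI r = xv t := by
    rw [hFval t hlt le_rfl, ← hxt]
  constructor
  · exact hint.congr_fun hEq measurableSet_Ioo
  · rw [← hxvt, heq, hcdef]
    congr 1
    exact setIntegral_congr_fun measurableSet_Ioo hEq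
end

section
/- Time-dependent deterministic mild Itô formula (Theorem 1 with vanishing mild diffusion). In the deterministic mild-process setting, let V be a separable real Hilbert space and let φ : I × Ȟ → V be continuous with continuous partial Fréchet derivatives ∂₁φ : I × Ȟ → V, ∂₂φ : I × Ȟ → L(Ȟ,V) and ∂₂²φ : I × Ȟ → L^{(2)}(Ȟ,V). Then for all t₀, t ∈ I with t₀ < t one has ∫_{t₀}^{t} ‖∂₁φ(s, S_{s,t} x_s)‖_V ds < ∞ and ∫_{t₀}^{t} ‖∂₂φ(s, S_{s,t} x_s)(S_{s,t} y_s)‖_V ds < ∞, and φ(t, x_t) = φ(t₀, S_{t₀,t} x_{t₀}) + ∫_{t₀}^{t} ∂₁φ(s, S_{s,t} x_s) ds + ∫_{t₀}^{t} ∂₂φ(s, S_{s,t} x_s)(S_{s,t} y_s) ds. -/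
open MeasureTheory Set

open intervalIntegral in
theorem ftc_aux_mild {Hv V : Type*}
    [NormedAddCommGroup Hv] [NormedSpace ℝ Hv] [CompleteSpace Hv]
    [NormedAddCommGroup V] [NormedSpace ℝ V] [CompleteSpace V]
    (I : Set ℝ) (a b : ℝ) (hab : a < b) (hIcc : Icc a b ⊆ I)
    (φ φ₁ : ℝ → Hv → V) (φ₂ : ℝ → Hv → (Hv →L[ℝ] V))
    (hφ_cont : ContinuousOn (fun p : ℝ × Hv => φ p.1 p.2) (I ×ˢ (univ : Set Hv)))
    (hφ₁ : ∀ s ∈ I, ∀ v : Hv, HasDerivWithinAt (fun r => φ r v) (φ₁ s v) I s)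
    (hφ₁_cont : ContinuousOn (fun p : ℝ × Hv => φ₁ p.1 p.2) (I ×ˢ (univ : Set Hv)))
    (hφ₂ : ∀ s ∈ I, ∀ v : Hv, HasFDerivAt (φ s) (φ₂ s v) v)
    (hφ₂_cont : ContinuousOn (fun p : ℝ × Hv => φ₂ p.1 p.2) (I ×ˢ (univ : Set Hv)))
    (g : ℝ → Hv) (hg : Integrable g) (u : ℝ → Hv)
    (hu : ∀ s, u s = u a + ∫ r in a..s, g r) :
    φ b (u b) = φ a (u a) + (∫ s in a..b, φ₁ s (u s)) + ∫ s in a..b, φ₂ s (u s) (g s) := by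
  haveI : SecondCountableTopologyEither ℝ (Hv →L[ℝ] V) :=
    secondCountableTopologyEither_of_left ℝ _
  -- continuity of u
  have hu_cont : Continuous u := by
    have h1 : Continuous fun s => ∫ r in a..s, g r :=
      intervalIntegral.continuous_primitive (fun c d => hg.intervalIntegrable) a
    have : u = fun s => u a + ∫ r in a..s, g r := funext hu
    rw [this]; exact continuous_const.add h1
  have husub : ∀ p q : ℝ, u q - u p = ∫ r in p..q, g r := by
    intro p q
    rw [hu p, hu q, add_sub_add_left_eq_sub,
      integral_interval_sub_left hg.intervalIntegrable hg.intervalIntegrable]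
  have hIoo : Ioo a b ⊆ interior I := by
    rw [← interior_Icc]; exact interior_mono hIcc
  -- compact sets
  set K : Set Hv := u '' Icc a b with hKdef
  have hK : IsCompact K := isCompact_Icc.image hu_cont
  set m : ℝ × Hv × Hv → Hv := fun q => q.2.1 + q.1 • (q.2.2 - q.2.1) with hmdef
  have hm : Continuous m := by fun_prop
  set K₂ : Set Hv := m '' ((Icc (0:ℝ) 1) ×ˢ K ×ˢ K) with hK₂def
  have hK₂ : IsCompact K₂ := ((isCompact_Icc).prod (hK.prod hK)).image hm
  have hKK₂ : K ⊆ K₂ := by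
    intro v hv
    exact ⟨(0, v, v), ⟨⟨le_refl 0, zero_le_one⟩, hv, hv⟩, by simp [hmdef]⟩
  have hseg : ∀ p q θ : ℝ, p ∈ Icc a b → q ∈ Icc a b → θ ∈ Icc (0:ℝ) 1 →
      u p + θ • (u q - u p) ∈ K₂ := by
    intro p q θ hp hq hθ
    exact ⟨(θ, u p, u q), ⟨hθ, mem_image_of_mem u hp, mem_image_of_mem u hq⟩, rfl⟩
  set C : Set (ℝ × Hv) := Icc a b ×ˢ K₂ with hCdef
  have hC : IsCompact C := isCompact_Icc.prod hK₂
  have hCI : C ⊆ I ×ˢ (univ : Set Hv) := fun p hp => ⟨hIcc hp.1, mem_univ _⟩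
  -- integrability of the two integrands
  have hzu : ContinuousOn (fun r : ℝ => (r, u r)) (Icc a b) :=
    (continuous_id.prodMk hu_cont).continuousOn
  have hzmaps : MapsTo (fun r : ℝ => (r, u r)) (Icc a b) (I ×ˢ (univ : Set Hv)) :=
    fun r hr => ⟨hIcc hr, mem_univ _⟩
  have hF₁c : ContinuousOn (fun r => φ₁ r (u r)) (Icc a b) :=
    hφ₁_cont.comp hzu hzmaps
  have hF₁int : ∀ p q : ℝ, p ∈ Icc a b → q ∈ Icc a b →
      IntervalIntegrable (fun r => φ₁ r (u r)) volume p q := by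
    intro p q hp hq
    exact (hF₁c.mono (uIcc_subset_Icc hp hq)).intervalIntegrable
  have hAc : ContinuousOn (fun r => φ₂ r (u r)) (Icc a b) := hφ₂_cont.comp hzu hzmaps
  obtain ⟨M, hM⟩ := isCompact_Icc.exists_bound_of_continuousOn hAc
  have hF₂int' : IntegrableOn (fun r => φ₂ r (u r) (g r)) (Icc a b) := by
    apply Integrable.mono' (g := fun r => M * ‖g r‖)
      (((hg.norm.const_mul M)).integrableOn)
    · exact (isBoundedBilinearMap_apply.continuous).comp_aestronglyMeasurable
        ((hAc.aestronglyMeasurable measurableSet_Icc).prodMk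
          hg.aestronglyMeasurable.restrict)
    · filter_upwards [ae_restrict_mem measurableSet_Icc] with r hr
      exact le_trans ((φ₂ r (u r)).le_opNorm (g r))
        (mul_le_mul_of_nonneg_right (hM r hr) (norm_nonneg _))
  have hF₂int : ∀ p q : ℝ, p ∈ Icc a b → q ∈ Icc a b →
      IntervalIntegrable (fun r => φ₂ r (u r) (g r)) volume p q := by
    intro p q hp hq
    rw [intervalIntegrable_iff]
    exact hF₂int'.mono_set ((uIoc_subset_uIcc ..).trans (uIcc_subset_Icc hp hq))
  -- uniform continuity moduli
  have hucU : UniformContinuousOn u (Icc a b) :=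
    isCompact_Icc.uniformContinuousOn_of_continuous hu_cont.continuousOn
  have huc1 : UniformContinuousOn (fun p : ℝ × Hv => φ₁ p.1 p.2) C :=
    hC.uniformContinuousOn_of_continuous (hφ₁_cont.mono hCI)
  have huc2 : UniformContinuousOn (fun p : ℝ × Hv => φ₂ p.1 p.2) C :=
    hC.uniformContinuousOn_of_continuous (hφ₂_cont.mono hCI)
  -- the key local estimate
  have key : ∀ ε > (0:ℝ), ∃ δ > (0:ℝ), ∀ p q : ℝ, p ∈ Icc a b → q ∈ Icc a b → p < q →
      q - p < δ →
      ‖(φ q (u q) - φ p (u p)) -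
        ((∫ r in p..q, φ₁ r (u r)) + ∫ r in p..q, φ₂ r (u r) (g r))‖
        ≤ ε * (q - p) + ε * ∫ r in p..q, ‖g r‖ := by
    intro ε hε
    obtain ⟨δ₁, hδ₁pos, hδ₁⟩ := Metric.uniformContinuousOn_iff.1 huc1 ε hε
    obtain ⟨δ₂, hδ₂pos, hδ₂⟩ := Metric.uniformContinuousOn_iff.1 huc2 ε hε
    set η : ℝ := min δ₁ δ₂ / 2 with hηdef
    have hηpos : 0 < η := by positivity
    obtain ⟨δ₀, hδ₀pos, hδ₀⟩ := Metric.uniformContinuousOn_iff.1 hucU η hηpos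
    refine ⟨min δ₀ (min δ₁ δ₂), by positivity, ?_⟩
    intro p q hp hq hpq hlen
    have hpI : p ∈ I := hIcc hp
    have hIpq : Ioo p q ⊆ interior I :=
      fun r hr => hIoo ⟨lt_of_le_of_lt hp.1 hr.1, lt_of_lt_of_le hr.2 hq.2⟩
    have hpqIcc : Icc p q ⊆ Icc a b := Icc_subset_Icc hp.1 hq.2
    have hlen₀ : q - p < δ₀ := lt_of_lt_of_le hlen (min_le_left _ _)
    have hlen₁₂ : q - p < min δ₁ δ₂ := lt_of_lt_of_le hlen (min_le_right _ _)
    -- distance estimates for u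
    have hud : ∀ r₁ r₂, r₁ ∈ Icc a b → r₂ ∈ Icc a b → |r₁ - r₂| < δ₀ →
        dist (u r₁) (u r₂) < η := fun r₁ r₂ h1 h2 h3 => hδ₀ r₁ h1 r₂ h2 h3
    -- Step A
    have contA : ContinuousOn (fun r => φ r (u q)) (Icc p q) :=
      hφ_cont.comp ((continuous_id.prodMk continuous_const).continuousOn)
        (fun r hr => ⟨hIcc (hpqIcc hr), mem_univ _⟩)
    have derivA : ∀ r ∈ Ioo p q, HasDerivAt (fun r => φ r (u q)) (φ₁ r (u q)) r := by
      intro r hr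
      exact (hφ₁ r (interior_subset (hIpq hr)) (u q)).hasDerivAt
        (mem_interior_iff_mem_nhds.1 (hIpq hr))
    have intA : IntervalIntegrable (fun r => φ₁ r (u q)) volume p q :=
      (hφ₁_cont.comp ((continuous_id.prodMk continuous_const).continuousOn)
        (fun r hr => ⟨hIcc (hpqIcc ((uIcc_subset_Icc ⟨le_refl p, hpq.le⟩
          ⟨hpq.le, le_refl q⟩) hr)), mem_univ _⟩)).intervalIntegrable
    have stepA : φ q (u q) - φ p (u q) = ∫ r in p..q, φ₁ r (u q) :=
      (integral_eq_sub_of_hasDerivAt_of_le hpq.le contA derivA intA).symm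
    -- Step B
    set Δ : Hv := u q - u p with hΔdef
    set w : ℝ → Hv := fun θ => u p + θ • Δ with hwdef
    have hw0 : w 0 = u p := by simp [hwdef]
    have hw1 : w 1 = u q := by simp [hwdef, hΔdef]
    have hline : ∀ θ : ℝ, HasDerivAt w Δ θ := by
      intro θ
      have h := ((hasDerivAt_id θ).smul_const Δ).const_add (u p)
      rw [one_smul] at h
      exact h
    have hψ : ∀ θ ∈ uIcc (0:ℝ) 1, HasDerivAt (fun θ => φ p (w θ)) (φ₂ p (w θ) Δ) θ :=
      fun θ _ => (hφ₂ p hpI (w θ)).comp_hasDerivAt θ (hline θ)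
    have hwcont : Continuous w := by fun_prop
    have contB : Continuous (fun θ : ℝ => φ₂ p (w θ) Δ) := by
      have h1 : ContinuousOn (fun θ : ℝ => φ₂ p (w θ)) (univ : Set ℝ) :=
        hφ₂_cont.comp ((continuous_const.prodMk hwcont).continuousOn)
          (fun θ _ => ⟨hpI, mem_univ _⟩)
      have h2 : Continuous (fun θ : ℝ => φ₂ p (w θ)) := continuousOn_univ.1 h1
      exact isBoundedBilinearMap_apply.continuous.comp (h2.prodMk continuous_const)
    have stepB : φ p (u q) - φ p (u p) = ∫ θ in (0:ℝ)..1, φ₂ p (w θ) Δ := by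
      rw [integral_eq_sub_of_hasDerivAt hψ (contB.intervalIntegrable 0 1), hw0, hw1]
    -- memberships
    have hqK : u q ∈ K₂ := hKK₂ (mem_image_of_mem u hq)
    have hrmem : ∀ r ∈ Ioc p q, r ∈ Icc a b := fun r hr => hpqIcc ⟨hr.1.le, hr.2⟩
    have hpmem : p ∈ Icc a b := hp
    have hintApq : IntervalIntegrable (fun r => φ₁ r (u r)) volume p q :=
      hF₁int p q hp hq
    have hintF₂pq : IntervalIntegrable (fun r => φ₂ r (u r) (g r)) volume p q :=
      hF₂int p q hp hq
    -- bound for term A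
    have boundA : ‖(∫ r in p..q, φ₁ r (u q)) - ∫ r in p..q, φ₁ r (u r)‖ ≤ ε * (q - p) := by
      rw [← integral_sub intA hintApq]
      have hb := intervalIntegral.norm_integral_le_of_norm_le_const (C := ε) (a := p) (b := q)
        (f := fun r => φ₁ r (u q) - φ₁ r (u r)) ?_
      · rw [abs_of_pos (sub_pos.2 hpq)] at hb
        linarith [hb]
      · intro r hr
        rw [uIoc_of_le hpq.le] at hr
        have hrab : r ∈ Icc a b := hrmem r hr
        have hduqr : dist (u q) (u r) < η := by
          apply hδ₀ q hq r hrab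
          rw [Real.dist_eq, abs_of_nonneg (sub_nonneg.2 hr.2)]
          have : q - r < q - p := by linarith [hr.1]
          linarith [hlen₀]
        have hd : dist ((r, u q) : ℝ × Hv) (r, u r) < δ₁ := by
          rw [Prod.dist_eq]
          apply max_lt (by simpa using hδ₁pos)
          calc dist (u q) (u r) < η := hduqr
            _ ≤ min δ₁ δ₂ / 2 := le_of_eq rfl
            _ ≤ δ₁ / 2 := by gcongr; exact min_le_left _ _
            _ < δ₁ := by linarith
        have hlt := hδ₁ (r, u q) ⟨hrab, hqK⟩ (r, u r)
          ⟨hrab, hKK₂ (mem_image_of_mem u hrab)⟩ hd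
        rw [dist_eq_norm] at hlt
        exact hlt.le
    -- bound for term B
    have hgiv : IntervalIntegrable g volume p q := hg.intervalIntegrable
    have boundB : ‖(∫ θ in (0:ℝ)..1, φ₂ p (w θ) Δ) - ∫ r in p..q, φ₂ r (u r) (g r)‖
        ≤ ε * ∫ r in p..q, ‖g r‖ := by
      have hconst : (∫ _ in (0:ℝ)..1, (∫ r in p..q, φ₂ r (u r) (g r)))
          = ∫ r in p..q, φ₂ r (u r) (g r) := by simp
      rw [← hconst, ← integral_sub (contB.intervalIntegrable 0 1) intervalIntegrable_const]
      have hB1 : ∀ θ ∈ Set.uIoc (0:ℝ) 1,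
          ‖φ₂ p (w θ) Δ - ∫ r in p..q, φ₂ r (u r) (g r)‖ ≤ ε * ∫ r in p..q, ‖g r‖ := by
        intro θ hθ
        rw [uIoc_of_le zero_le_one] at hθ
        have hθ01 : θ ∈ Icc (0:ℝ) 1 := ⟨hθ.1.le, hθ.2⟩
        have hwθK : w θ ∈ K₂ := hseg p q θ hp hq hθ01
        have happ : φ₂ p (w θ) Δ = ∫ r in p..q, φ₂ p (w θ) (g r) := by
          rw [hΔdef, husub p q, (φ₂ p (w θ)).intervalIntegral_comp_comm hgiv]
        have hLint : IntervalIntegrable (fun r => φ₂ p (w θ) (g r)) volume p q := by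
          rw [intervalIntegrable_iff] at hgiv ⊢
          exact (φ₂ p (w θ)).integrable_comp hgiv
        rw [happ, ← integral_sub hLint hintF₂pq]
        have hptw : ∀ᵐ r ∂(volume.restrict (Set.uIoc p q)),
            ‖φ₂ p (w θ) (g r) - φ₂ r (u r) (g r)‖ ≤ ε * ‖g r‖ := by
          filter_upwards [ae_restrict_mem measurableSet_uIoc] with r hr
          rw [uIoc_of_le hpq.le] at hr
          have hrab : r ∈ Icc a b := hrmem r hr
          have h1 : dist (u p) (u r) < η := by
            apply hδ₀ p hp r hrab
            rw [Real.dist_eq, abs_of_nonpos (by linarith [hr.1] : p - r ≤ 0)]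
            linarith [hr.2, hlen₀]
          have h2 : ‖Δ‖ < η := by
            rw [hΔdef, ← dist_eq_norm]
            apply hδ₀ q hq p hp
            rw [Real.dist_eq, abs_of_nonneg (by linarith)]
            exact hlen₀
          have hop : dist ((p, w θ) : ℝ × Hv) (r, u r) < δ₂ := by
            rw [Prod.dist_eq]
            apply max_lt
            · show dist p r < δ₂
              rw [Real.dist_eq, abs_of_nonpos (by linarith [hr.1] : p - r ≤ 0)]
              linarith [hr.2, hlen₁₂, min_le_right δ₁ δ₂]
            · show dist (w θ) (u r) < δ₂
              have hwsub : w θ - u r = (u p - u r) + θ • Δ := by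
                show u p + θ • Δ - u r = (u p - u r) + θ • Δ
                rw [sub_add_eq_add_sub]
              calc dist (w θ) (u r) = ‖(u p - u r) + θ • Δ‖ := by rw [dist_eq_norm, hwsub]
                _ ≤ ‖u p - u r‖ + ‖θ • Δ‖ := norm_add_le _ _
                _ ≤ ‖u p - u r‖ + ‖Δ‖ := by
                    gcongr
                    rw [norm_smul, Real.norm_eq_abs, abs_of_nonneg hθ01.1]
                    exact mul_le_of_le_one_left (norm_nonneg _) hθ01.2
                _ < η + η := by rw [← dist_eq_norm]; exact add_lt_add h1 h2
                _ = min δ₁ δ₂ := by rw [hηdef]; ring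
                _ ≤ δ₂ := min_le_right _ _
          have hlt := hδ₂ (p, w θ) ⟨hp, hwθK⟩ (r, u r)
            ⟨hrab, hKK₂ (mem_image_of_mem u hrab)⟩ hop
          rw [dist_eq_norm] at hlt
          calc ‖φ₂ p (w θ) (g r) - φ₂ r (u r) (g r)‖
              = ‖(φ₂ p (w θ) - φ₂ r (u r)) (g r)‖ := by simp
            _ ≤ ‖φ₂ p (w θ) - φ₂ r (u r)‖ * ‖g r‖ :=
                ContinuousLinearMap.le_opNorm _ _
            _ ≤ ε * ‖g r‖ := mul_le_mul_of_nonneg_right hlt.le (norm_nonneg _)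
        have hbd := intervalIntegral.norm_integral_le_of_norm_le hpq.le
          (by rw [uIoc_of_le hpq.le] at hptw; exact (ae_restrict_iff' measurableSet_Ioc).1 hptw)
          ((hg.norm.const_mul ε).intervalIntegrable)
        refine le_trans hbd ?_
        have hnn : 0 ≤ ∫ r in p..q, ε * ‖g r‖ :=
          intervalIntegral.integral_nonneg hpq.le (fun r _ => by positivity)
        rw [intervalIntegral.integral_const_mul]
      have hb := intervalIntegral.norm_integral_le_of_norm_le_const
        (C := ε * ∫ r in p..q, ‖g r‖) hB1
      simpa using hb
    have hsplit : (φ q (u q) - φ p (u p)) -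
        ((∫ r in p..q, φ₁ r (u r)) + ∫ r in p..q, φ₂ r (u r) (g r))
        = ((∫ r in p..q, φ₁ r (u q)) - ∫ r in p..q, φ₁ r (u r))
          + ((∫ θ in (0:ℝ)..1, φ₂ p (w θ) Δ) - ∫ r in p..q, φ₂ r (u r) (g r)) := by
      rw [← stepA, ← stepB]; abel
    rw [hsplit]
    exact le_trans (norm_add_le _ _) (add_le_add boundA boundB)
  -- assemble: the global difference is 0
  set D : V := (φ b (u b) - φ a (u a)) -
    ((∫ r in a..b, φ₁ r (u r)) + ∫ r in a..b, φ₂ r (u r) (g r)) with hDdef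
  have hDle : ∀ ε > (0:ℝ), ‖D‖ ≤ ε * ((b - a) + ∫ r in a..b, ‖g r‖) := by
    intro ε hε
    obtain ⟨δ, hδpos, hest⟩ := key ε hε
    obtain ⟨n, hn⟩ := exists_nat_gt ((b - a) / δ)
    have hn0 : 0 < (n:ℝ) := lt_of_le_of_lt (div_nonneg (by linarith) hδpos.le) hn
    set c : ℕ → ℝ := fun k => a + k * ((b - a) / n) with hcdef
    have hstep : ∀ k : ℕ, c (k+1) - c k = (b - a) / n := by
      intro k; simp only [hcdef]; push_cast; ring
    have hsteppos : 0 < (b - a) / n := by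
      apply div_pos (by linarith) hn0
    have hstepδ : (b - a) / n < δ := by
      rw [div_lt_iff₀ hn0]
      calc b - a = ((b - a) / δ) * δ := by field_simp
        _ < ↑n * δ := mul_lt_mul_of_pos_right hn hδpos
        _ = δ * ↑n := mul_comm _ _
    have hc0 : c 0 = a := by simp [hcdef]
    have hne : (n:ℝ) ≠ 0 := ne_of_gt hn0
    have hcn : c n = b := by
      simp only [hcdef]; field_simp; ring
    have hmono : ∀ k : ℕ, c k < c (k+1) := by
      intro k
      have h := hstep k
      have h2 : 0 < c (k+1) - c k := h ▸ hsteppos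
      linarith
    have hmono' : Monotone c := monotone_nat_of_le_succ (fun k => (hmono k).le)
    have hmem : ∀ k : ℕ, k ≤ n → c k ∈ Icc a b := by
      intro k hk
      constructor
      · rw [← hc0]; exact hmono' (Nat.zero_le k)
      · rw [← hcn]; exact hmono' hk
    have hn1 : 1 ≤ n := by
      by_contra hcon
      push_neg at hcon
      interval_cases n
      · simp at hn0
    -- telescoping identities
    have hsum1 : ∑ k ∈ Finset.range n, (φ (c (k+1)) (u (c (k+1))) - φ (c k) (u (c k)))
        = φ b (u b) - φ a (u a) := by
      rw [Finset.sum_range_sub (fun k => φ (c k) (u (c k))), hc0, hcn]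
    have hsum2 : ∑ k ∈ Finset.range n, ∫ r in c k..c (k+1), φ₁ r (u r)
        = ∫ r in a..b, φ₁ r (u r) := by
      rw [← hc0, ← hcn]
      exact intervalIntegral.sum_integral_adjacent_intervals
        (fun k hk => hF₁int _ _ (hmem k (le_of_lt hk)) (hmem (k+1) hk))
    have hsum3 : ∑ k ∈ Finset.range n, ∫ r in c k..c (k+1), φ₂ r (u r) (g r)
        = ∫ r in a..b, φ₂ r (u r) (g r) := by
      rw [← hc0, ← hcn]
      exact intervalIntegral.sum_integral_adjacent_intervals
        (fun k hk => hF₂int _ _ (hmem k (le_of_lt hk)) (hmem (k+1) hk))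
    have hsum4 : ∑ k ∈ Finset.range n, ∫ r in c k..c (k+1), ‖g r‖
        = ∫ r in a..b, ‖g r‖ := by
      rw [← hc0, ← hcn]
      exact intervalIntegral.sum_integral_adjacent_intervals
        (fun k _ => hg.norm.intervalIntegrable)
    have hDsum : D = ∑ k ∈ Finset.range n,
        ((φ (c (k+1)) (u (c (k+1))) - φ (c k) (u (c k))) -
          ((∫ r in c k..c (k+1), φ₁ r (u r)) + ∫ r in c k..c (k+1), φ₂ r (u r) (g r))) := by
      rw [Finset.sum_sub_distrib, Finset.sum_add_distrib, hsum1, hsum2, hsum3, hDdef]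
    rw [hDsum]
    calc ‖∑ k ∈ Finset.range n, ((φ (c (k+1)) (u (c (k+1))) - φ (c k) (u (c k))) -
          ((∫ r in c k..c (k+1), φ₁ r (u r)) + ∫ r in c k..c (k+1), φ₂ r (u r) (g r)))‖
        ≤ ∑ k ∈ Finset.range n, ‖(φ (c (k+1)) (u (c (k+1))) - φ (c k) (u (c k))) -
          ((∫ r in c k..c (k+1), φ₁ r (u r)) + ∫ r in c k..c (k+1), φ₂ r (u r) (g r))‖ :=
          norm_sum_le _ _
      _ ≤ ∑ k ∈ Finset.range n,
          (ε * (c (k+1) - c k) + ε * ∫ r in c k..c (k+1), ‖g r‖) := by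
          apply Finset.sum_le_sum
          intro k hk
          rw [Finset.mem_range] at hk
          exact hest (c k) (c (k+1)) (hmem k hk.le) (hmem (k+1) hk) (hmono k)
            (by rw [hstep]; exact hstepδ)
      _ = ε * ((b - a) + ∫ r in a..b, ‖g r‖) := by
          rw [Finset.sum_add_distrib, ← Finset.mul_sum, ← Finset.mul_sum,
            Finset.sum_range_sub c, hc0, hcn, hsum4]
          ring
  have hD0 : D = 0 := by
    by_contra hcon
    have hpos : 0 < ‖D‖ := norm_pos_iff.2 hcon
    set Cst : ℝ := (b - a) + ∫ r in a..b, ‖g r‖ with hCstdef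
    have hCst : 0 ≤ Cst := by
      apply add_nonneg (by linarith)
      exact intervalIntegral.integral_nonneg hab.le (fun r _ => norm_nonneg _)
    have h1 := hDle (‖D‖ / (2 * (Cst + 1))) (by positivity)
    have h2 : ‖D‖ / (2 * (Cst + 1)) * Cst < ‖D‖ := by
      rw [div_mul_eq_mul_div, div_lt_iff₀ (by positivity)]
      nlinarith
    exact absurd (lt_of_le_of_lt h1 h2) (lt_irrefl _)
  have hfin : φ b (u b) - φ a (u a)
      = (∫ r in a..b, φ₁ r (u r)) + ∫ r in a..b, φ₂ r (u r) (g r) := by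
    rw [← sub_eq_zero]; rw [hDdef] at hD0; exact hD0
  calc φ b (u b) = φ a (u a) + (φ b (u b) - φ a (u a)) := by abel
    _ = φ a (u a) + ((∫ r in a..b, φ₁ r (u r)) + ∫ r in a..b, φ₂ r (u r) (g r)) := by
        rw [hfin]
    _ = φ a (u a) + (∫ s in a..b, φ₁ s (u s)) + ∫ s in a..b, φ₂ s (u s) (g s) := by
        rw [add_assoc]


/-- **Time-dependent deterministic mild Itô formula** (Theorem 1 with vanishing mild diffusion).
In the deterministic mild-process setting, for `φ ∈ C^{1,2}(I × Ȟ, V)` (with continuous partial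
Fréchet derivatives `∂₁φ`, `∂₂φ`, `∂₂²φ`) and `t₀ < t` in `I`, the functions
`s ↦ ∂₁φ(s, S_{s,t} x_s)` and `s ↦ ∂₂φ(s, S_{s,t} x_s)(S_{s,t} y_s)` are Bochner integrable
on `(t₀,t)` and
`φ(t, x_t) = φ(t₀, S_{t₀,t} x_{t₀}) + ∫ ∂₁φ(s, S_{s,t} x_s) ds + ∫ ∂₂φ(s, S_{s,t} x_s)(S_{s,t} y_s) ds`. -/
theorem mild_ito_formula_deterministic
    {Hv Ht Hh V : Type*}
    [NormedAddCommGroup Hv] [InnerProductSpace ℝ Hv] [CompleteSpace Hv]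
    [SecondCountableTopology Hv] [MeasurableSpace Hv] [BorelSpace Hv]
    [NormedAddCommGroup Ht] [InnerProductSpace ℝ Ht] [CompleteSpace Ht]
    [SecondCountableTopology Ht] [MeasurableSpace Ht] [BorelSpace Ht]
    [NormedAddCommGroup Hh] [InnerProductSpace ℝ Hh] [CompleteSpace Hh]
    [SecondCountableTopology Hh] [MeasurableSpace Hh] [BorelSpace Hh]
    [NormedAddCommGroup V] [InnerProductSpace ℝ V] [CompleteSpace V]
    [SecondCountableTopology V]
    -- the time set `I ⊆ [0,∞)`, closed and convex with nonempty interior, and `τ = inf I`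
    (I : Set ℝ) (hI0 : I ⊆ Ici (0 : ℝ)) (hIclosed : IsClosed I)
    (hIconv : Convex ℝ I) (hIint : (interior I).Nonempty)
    (τ : ℝ) (hτ : IsGLB I τ)
    -- continuous dense embeddings `Ȟ ⊆ H̃ ⊆ Ĥ`
    (e₁ : Hv →L[ℝ] Ht) (he₁ : Function.Injective e₁) (he₁d : DenseRange e₁)
    (e₂ : Ht →L[ℝ] Hh) (he₂ : Function.Injective e₂) (he₂d : DenseRange e₂)
    -- the semigroup `S`
    (S : ℝ → ℝ → (Hh →L[ℝ] Hv))
    (hS_comp : ∀ t₁ t₂ t₃, t₁ ∈ I → t₂ ∈ I → t₃ ∈ I → t₁ < t₂ → t₂ < t₃ →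
      ∀ v : Hh, S t₂ t₃ (e₂ (e₁ (S t₁ t₂ v))) = S t₁ t₃ v)
    (hS_meas : ∀ v : Hh, Measurable fun p : ℝ × ℝ => S p.1 p.2 v)
    -- the mild process `x` with mild drift `y`; `xv t` realizes `x t ∈ Ȟ` for `t > τ`
    (x : ℝ → Ht) (hx : Measurable x)
    (y : ℝ → Hh) (hy : Measurable y)
    (xv : ℝ → Hv) (hxv : ∀ t ∈ I, τ < t → e₁ (xv t) = x t)
    (hInt : ∀ t ∈ I, IntegrableOn (fun s => S s t (y s)) (Ioo τ t))
    (hMild : ∀ t ∈ I, τ < t →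
      xv t = S τ t (e₂ (x τ)) + ∫ s in Ioo τ t, S s t (y s))
    -- the test function `φ : I × Ȟ → V` with its continuous partial Fréchet derivatives
    (φ : ℝ → Hv → V)
    (φ₁ : ℝ → Hv → V) (φ₂ : ℝ → Hv → (Hv →L[ℝ] V))
    (φ₂₂ : ℝ → Hv → (Hv →L[ℝ] Hv →L[ℝ] V))
    (hφ_cont : ContinuousOn (fun p : ℝ × Hv => φ p.1 p.2) (I ×ˢ (univ : Set Hv)))
    (hφ₁ : ∀ s ∈ I, ∀ v : Hv, HasDerivWithinAt (fun r => φ r v) (φ₁ s v) I s)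
    (hφ₁_cont : ContinuousOn (fun p : ℝ × Hv => φ₁ p.1 p.2) (I ×ˢ (univ : Set Hv)))
    (hφ₂ : ∀ s ∈ I, ∀ v : Hv, HasFDerivAt (φ s) (φ₂ s v) v)
    (hφ₂_cont : ContinuousOn (fun p : ℝ × Hv => φ₂ p.1 p.2) (I ×ˢ (univ : Set Hv)))
    (hφ₂₂ : ∀ s ∈ I, ∀ v : Hv, HasFDerivAt (φ₂ s) (φ₂₂ s v) v)
    (hφ₂₂_cont : ContinuousOn (fun p : ℝ × Hv => φ₂₂ p.1 p.2) (I ×ˢ (univ : Set Hv)))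
    (t₀ t : ℝ) (ht₀ : t₀ ∈ I) (ht : t ∈ I) (hlt : t₀ < t) :
    IntegrableOn (fun s => φ₁ s (S s t (e₂ (x s)))) (Ioo t₀ t) ∧
    IntegrableOn (fun s => φ₂ s (S s t (e₂ (x s))) (S s t (y s))) (Ioo t₀ t) ∧
    φ t (xv t) =
      φ t₀ (S t₀ t (e₂ (x t₀)))
        + (∫ s in Ioo t₀ t, φ₁ s (S s t (e₂ (x s))))
        + ∫ s in Ioo t₀ t, φ₂ s (S s t (e₂ (x s))) (S s t (y s)) := by
  haveI : SecondCountableTopologyEither ℝ (Hv →L[ℝ] V) :=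
    secondCountableTopologyEither_of_left ℝ _
  -- basic facts about `I` and `τ`
  have hIne : I.Nonempty := hIint.mono interior_subset
  have hτI : τ ∈ I := hτ.mem_of_isClosed hIne hIclosed
  have hτt₀ : τ ≤ t₀ := hτ.1 ht₀
  have hτt : τ < t := lt_of_le_of_lt hτt₀ hlt
  have hIccτt : Icc τ t ⊆ I := hIconv.ordConnected.out hτI ht
  have hIcct₀t : Icc t₀ t ⊆ I := hIconv.ordConnected.out ht₀ ht
  -- the mild drift and the deterministic mild process in `Hv`
  set g : ℝ → Hv := (Ioo τ t).indicator (fun s => S s t (y s)) with hgdef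
  have hg : Integrable g := (integrable_indicator_iff measurableSet_Ioo).2 (hInt t ht)
  set u : ℝ → Hv := fun s => S τ t (e₂ (x τ)) + ∫ r in τ..s, g r with hudef
  have hgeq : ∀ s ∈ Ioo τ t, g s = S s t (y s) := fun s hs => indicator_of_mem hs _
  have huint : ∀ s, τ ≤ s → s ≤ t →
      (∫ r in τ..s, g r) = ∫ r in Ioo τ s, S r t (y r) := by
    intro s h1 h2
    rw [intervalIntegral.integral_of_le h1, integral_Ioc_eq_integral_Ioo]
    apply setIntegral_congr_fun measurableSet_Ioo
    intro r hr
    exact Set.indicator_of_mem (show r ∈ Ioo τ t from ⟨hr.1, lt_of_lt_of_le hr.2 h2⟩) _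
  have hu_eq : ∀ s, τ < s → s < t → S s t (e₂ (x s)) = u s := by
    intro s hs1 hs2
    have hsI : s ∈ I := hIccτt ⟨hs1.le, hs2.le⟩
    set T : Hv →L[ℝ] Hv := (S s t).comp (e₂.comp e₁) with hT
    have hxs : S s t (e₂ (x s)) = T (xv s) := by
      simp only [hT, ContinuousLinearMap.comp_apply]
      rw [hxv s hsI hs1]
    rw [hxs, hMild s hsI hs1, map_add, hudef]
    simp only
    rw [huint s hs1.le hs2.le]
    congr 1
    · exact hS_comp τ s t hτI hsI ht hs1 hs2 (e₂ (x τ))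
    · rw [← T.integral_comp_comm (hInt s hsI)]
      apply setIntegral_congr_fun measurableSet_Ioo
      intro r hr
      exact hS_comp r s t (hIccτt ⟨hr.1.le, (hr.2.trans hs2).le⟩) hsI ht hr.2 hs2 (y r)
  have hu_t : u t = xv t := by
    rw [hudef]
    simp only
    rw [huint t hτt.le le_rfl, hMild t ht hτt]
  have hu_t0 : S t₀ t (e₂ (x t₀)) = u t₀ := by
    rcases eq_or_lt_of_le hτt₀ with he | hlt'
    · rw [← he]
      simp [hudef]
    · exact hu_eq t₀ hlt' hlt
  -- base the process at `t₀` and apply the abstract formula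
  have hu_base : ∀ s, u s = u t₀ + ∫ r in t₀..s, g r := by
    intro s
    have hsub := intervalIntegral.integral_interval_sub_left
      (hg.intervalIntegrable : IntervalIntegrable g volume τ s)
      (hg.intervalIntegrable : IntervalIntegrable g volume τ t₀)
    calc u s = S τ t (e₂ (x τ)) + ∫ r in τ..s, g r := rfl
      _ = (S τ t (e₂ (x τ)) + ∫ r in τ..t₀, g r)
          + ((∫ r in τ..s, g r) - ∫ r in τ..t₀, g r) := by abel
      _ = u t₀ + ∫ r in t₀..s, g r := by rw [hsub]
  have main := ftc_aux_mild I t₀ t hlt hIcct₀t φ φ₁ φ₂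
    hφ_cont hφ₁ hφ₁_cont hφ₂ hφ₂_cont g hg u hu_base
  -- continuity of `u` and integrability of the integrands
  have hu_cont : Continuous u := by
    have h1 : Continuous fun s => ∫ r in τ..s, g r :=
      intervalIntegral.continuous_primitive (fun c d => hg.intervalIntegrable) τ
    rw [hudef]
    exact continuous_const.add h1
  have hzu : ContinuousOn (fun r : ℝ => (r, u r)) (Icc t₀ t) :=
    (continuous_id.prodMk hu_cont).continuousOn
  have hzmaps : MapsTo (fun r : ℝ => (r, u r)) (Icc t₀ t) (I ×ˢ (univ : Set Hv)) :=
    fun r hr => ⟨hIcct₀t hr, mem_univ _⟩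
  have hF₁c : ContinuousOn (fun r => φ₁ r (u r)) (Icc t₀ t) := hφ₁_cont.comp hzu hzmaps
  have hF₁i : IntegrableOn (fun r => φ₁ r (u r)) (Icc t₀ t) :=
    hF₁c.integrableOn_Icc
  have hAc : ContinuousOn (fun r => φ₂ r (u r)) (Icc t₀ t) := hφ₂_cont.comp hzu hzmaps
  obtain ⟨M, hM⟩ := isCompact_Icc.exists_bound_of_continuousOn hAc
  have hF₂i : IntegrableOn (fun r => φ₂ r (u r) (g r)) (Icc t₀ t) := by
    apply Integrable.mono' (g := fun r => M * ‖g r‖)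
      (((hg.norm.const_mul M)).integrableOn)
    · exact (isBoundedBilinearMap_apply.continuous).comp_aestronglyMeasurable
        ((hAc.aestronglyMeasurable measurableSet_Icc).prodMk
          hg.aestronglyMeasurable.restrict)
    · filter_upwards [ae_restrict_mem measurableSet_Icc] with r hr
      exact le_trans ((φ₂ r (u r)).le_opNorm (g r))
        (mul_le_mul_of_nonneg_right (hM r hr) (norm_nonneg _))
  -- identification of the integrands on `Ioo t₀ t`
  have hIooτ : Ioo t₀ t ⊆ Ioo τ t := Ioo_subset_Ioo hτt₀ le_rfl
  have hcong1 : EqOn (fun s => φ₁ s (u s)) (fun s => φ₁ s (S s t (e₂ (x s)))) (Ioo t₀ t) := by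
    intro s hs
    simp only
    rw [hu_eq s (lt_of_le_of_lt hτt₀ hs.1) hs.2]
  have hcong2 : EqOn (fun s => φ₂ s (u s) (g s))
      (fun s => φ₂ s (S s t (e₂ (x s))) (S s t (y s))) (Ioo t₀ t) := by
    intro s hs
    simp only
    rw [hu_eq s (lt_of_le_of_lt hτt₀ hs.1) hs.2, hgeq s (hIooτ hs)]
  have hIoosub : Ioo t₀ t ⊆ Icc t₀ t := Ioo_subset_Icc_self
  refine ⟨((hF₁i.mono_set hIoosub).congr_fun hcong1 measurableSet_Ioo),
    ((hF₂i.mono_set hIoosub).congr_fun hcong2 measurableSet_Ioo), ?_⟩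
  -- final identity
  have hi1 : (∫ s in t₀..t, φ₁ s (u s)) = ∫ s in Ioo t₀ t, φ₁ s (S s t (e₂ (x s))) := by
    rw [intervalIntegral.integral_of_le hlt.le, integral_Ioc_eq_integral_Ioo]
    exact setIntegral_congr_fun measurableSet_Ioo hcong1
  have hi2 : (∫ s in t₀..t, φ₂ s (u s) (g s))
      = ∫ s in Ioo t₀ t, φ₂ s (S s t (e₂ (x s))) (S s t (y s)) := by
    rw [intervalIntegral.integral_of_le hlt.le, integral_Ioc_eq_integral_Ioo]
    exact setIntegral_congr_fun measurableSet_Ioo hcong2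
  rw [hu_t, ← hu_t0, hi1, hi2] at main
  exact main
end

section
/- Mild integration by parts (Example 1, deterministic case). Let (I, τ, Ȟ ⊆ H̃ ⊆ Ĥ, S, x, y) and (I, τ, Ȟ' ⊆ H̃' ⊆ Ĥ', 𝒮, 𝓍, 𝓎) each be a deterministic mild-process setting (with the same time set I), let V be a separable real Hilbert space and let φ : Ȟ × Ȟ' → V be a bounded bilinear map. Then for all t₀, t ∈ I with t₀ < t, φ(x_t, 𝓍_t) = φ(S_{t₀,t} x_{t₀}, 𝒮_{t₀,t} 𝓍_{t₀}) + ∫_{t₀}^{t} φ(S_{s,t} y_s, 𝒮_{s,t} 𝓍_s) ds + ∫_{t₀}^{t} φ(S_{s,t} x_s, 𝒮_{s,t} 𝓎_s) ds, where both integrands are Bochner integrable on (t₀,t). -/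
open MeasureTheory Set

/-- Auxiliary composition step: if the mild identity is known at time `a` (restarted at `c`),
then applying `S a b ∘ e₂ ∘ e₁` transports it to time `b`. -/
lemma mild_aux_compose
    {Hv Ht Hh : Type*}
    [NormedAddCommGroup Hv] [NormedSpace ℝ Hv] [CompleteSpace Hv]
    [NormedAddCommGroup Ht] [NormedSpace ℝ Ht]
    [NormedAddCommGroup Hh] [NormedSpace ℝ Hh]
    (I : Set ℝ)
    (e₁ : Hv →L[ℝ] Ht) (e₂ : Ht →L[ℝ] Hh)
    (S : ℝ → ℝ → (Hh →L[ℝ] Hv))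
    (hS_comp : ∀ t₁ t₂ t₃, t₁ ∈ I → t₂ ∈ I → t₃ ∈ I → t₁ < t₂ → t₂ < t₃ →
      ∀ v : Hh, S t₂ t₃ (e₂ (e₁ (S t₁ t₂ v))) = S t₁ t₃ v)
    (x : ℝ → Ht) (y : ℝ → Hh) (xv : ℝ → Hv)
    (hOC : OrdConnected I)
    {c a b : ℝ} (hc : c ∈ I) (ha : a ∈ I) (hb : b ∈ I) (hca : c < a) (hab : a < b)
    (hxa1 : e₁ (xv a) = x a)
    (hxa : xv a = S c a (e₂ (x c)) + ∫ r in Ioo c a, S r a (y r))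
    (hIca : IntegrableOn (fun r => S r a (y r)) (Ioo c a)) :
    S a b (e₂ (x a)) = S c b (e₂ (x c)) + ∫ r in Ioo c a, S r b (y r) := by
  set L : Hv →L[ℝ] Hv := (S a b).comp (e₂.comp e₁) with hL
  have hLdef : ∀ v : Hv, L v = S a b (e₂ (e₁ v)) := fun v => rfl
  calc S a b (e₂ (x a)) = L (xv a) := by rw [hLdef, hxa1]
    _ = L (S c a (e₂ (x c))) + L (∫ r in Ioo c a, S r a (y r)) := by
        rw [hxa, map_add]
    _ = S c b (e₂ (x c)) + ∫ r in Ioo c a, S r b (y r) := by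
        congr 1
        · exact hS_comp c a b hc ha hb hca hab _
        · rw [← L.integral_comp_comm hIca]
          refine setIntegral_congr_fun measurableSet_Ioo fun r hr => ?_
          exact hS_comp r a b (hOC.out hc ha ⟨hr.1.le, hr.2.le⟩) ha hb hr.2 hab _

/-- Auxiliary restart: the mild identity from `τ` can be restarted at any `a ∈ I`, `τ ≤ a`. -/
lemma mild_aux_restart
    {Hv Ht Hh : Type*}
    [NormedAddCommGroup Hv] [NormedSpace ℝ Hv] [CompleteSpace Hv]
    [NormedAddCommGroup Ht] [NormedSpace ℝ Ht]
    [NormedAddCommGroup Hh] [NormedSpace ℝ Hh]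
    (I : Set ℝ) (τ : ℝ)
    (e₁ : Hv →L[ℝ] Ht) (e₂ : Ht →L[ℝ] Hh)
    (S : ℝ → ℝ → (Hh →L[ℝ] Hv))
    (hS_comp : ∀ t₁ t₂ t₃, t₁ ∈ I → t₂ ∈ I → t₃ ∈ I → t₁ < t₂ → t₂ < t₃ →
      ∀ v : Hh, S t₂ t₃ (e₂ (e₁ (S t₁ t₂ v))) = S t₁ t₃ v)
    (x : ℝ → Ht) (y : ℝ → Hh) (xv : ℝ → Hv)
    (hOC : OrdConnected I)
    (hxv : ∀ t ∈ I, τ < t → e₁ (xv t) = x t)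
    (hInt : ∀ t ∈ I, IntegrableOn (fun s => S s t (y s)) (Ioo τ t))
    (hMild : ∀ t ∈ I, τ < t → xv t = S τ t (e₂ (x τ)) + ∫ s in Ioo τ t, S s t (y s))
    (hτI : τ ∈ I)
    {a b : ℝ} (ha : a ∈ I) (hb : b ∈ I) (hτa : τ ≤ a) (hab : a < b) :
    xv b = S a b (e₂ (x a)) + ∫ s in Ioo a b, S s b (y s) := by
  rcases eq_or_lt_of_le hτa with h | h
  · rw [← h]
    exact hMild b hb (lt_of_le_of_lt hτa hab)
  · have key := mild_aux_compose I e₁ e₂ S hS_comp x y xv hOC hτI ha hb h hab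
      (hxv a ha h) (hMild a ha h) (hInt a ha)
    have hIb := hInt b hb
    have hun : Ioo τ a ∪ Ico a b = Ioo τ b := Ioo_union_Ico_eq_Ioo h hab.le
    have hdisj : Disjoint (Ioo τ a) (Ico a b) :=
      Set.disjoint_left.2 fun r hr hr' => absurd hr.2 (not_lt.2 hr'.1)
    have hsplit : (∫ s in Ioo τ b, S s b (y s))
        = (∫ s in Ioo τ a, S s b (y s)) + ∫ s in Ioo a b, S s b (y s) := by
      rw [← hun, setIntegral_union hdisj measurableSet_Ico
        (hIb.mono_set (by rw [← hun]; exact subset_union_left))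
        (hIb.mono_set (by rw [← hun]; exact subset_union_right)),
        integral_Ico_eq_integral_Ioo]
    rw [hMild b hb (h.trans hab), hsplit, key, add_assoc]


set_option maxHeartbeats 1000000 in
/-- **Mild integration by parts** (Example 1, deterministic case).
Given two deterministic mild-process settings over the same time set `I` and a bounded bilinear
map `φ : Ȟ × Ȟ' → V`, for all `t₀ < t` in `I`:
`φ(x_t, 𝓍_t) = φ(S_{t₀,t} x_{t₀}, 𝒮_{t₀,t} 𝓍_{t₀}) + ∫ φ(S_{s,t} y_s, 𝒮_{s,t} 𝓍_s) ds
  + ∫ φ(S_{s,t} x_s, 𝒮_{s,t} 𝓎_s) ds`, both integrands being Bochner integrable on `(t₀,t)`. -/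
theorem mild_integration_by_parts
    {Hv Ht Hh Hv' Ht' Hh' V : Type*}
    [NormedAddCommGroup Hv] [InnerProductSpace ℝ Hv] [CompleteSpace Hv]
    [SecondCountableTopology Hv] [MeasurableSpace Hv] [BorelSpace Hv]
    [NormedAddCommGroup Ht] [InnerProductSpace ℝ Ht] [CompleteSpace Ht]
    [SecondCountableTopology Ht] [MeasurableSpace Ht] [BorelSpace Ht]
    [NormedAddCommGroup Hh] [InnerProductSpace ℝ Hh] [CompleteSpace Hh]
    [SecondCountableTopology Hh] [MeasurableSpace Hh] [BorelSpace Hh]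
    [NormedAddCommGroup Hv'] [InnerProductSpace ℝ Hv'] [CompleteSpace Hv']
    [SecondCountableTopology Hv'] [MeasurableSpace Hv'] [BorelSpace Hv']
    [NormedAddCommGroup Ht'] [InnerProductSpace ℝ Ht'] [CompleteSpace Ht']
    [SecondCountableTopology Ht'] [MeasurableSpace Ht'] [BorelSpace Ht']
    [NormedAddCommGroup Hh'] [InnerProductSpace ℝ Hh'] [CompleteSpace Hh']
    [SecondCountableTopology Hh'] [MeasurableSpace Hh'] [BorelSpace Hh']
    [NormedAddCommGroup V] [InnerProductSpace ℝ V] [CompleteSpace V]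
    [SecondCountableTopology V]
    -- the common time set `I ⊆ [0,∞)` and `τ = inf I`
    (I : Set ℝ) (hI0 : I ⊆ Ici (0 : ℝ)) (hIclosed : IsClosed I)
    (hIconv : Convex ℝ I) (hIint : (interior I).Nonempty)
    (τ : ℝ) (hτ : IsGLB I τ)
    -- first deterministic mild-process setting
    (e₁ : Hv →L[ℝ] Ht) (he₁ : Function.Injective e₁) (he₁d : DenseRange e₁)
    (e₂ : Ht →L[ℝ] Hh) (he₂ : Function.Injective e₂) (he₂d : DenseRange e₂)
    (S : ℝ → ℝ → (Hh →L[ℝ] Hv))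
    (hS_comp : ∀ t₁ t₂ t₃, t₁ ∈ I → t₂ ∈ I → t₃ ∈ I → t₁ < t₂ → t₂ < t₃ →
      ∀ v : Hh, S t₂ t₃ (e₂ (e₁ (S t₁ t₂ v))) = S t₁ t₃ v)
    (hS_meas : ∀ v : Hh, Measurable fun p : ℝ × ℝ => S p.1 p.2 v)
    (x : ℝ → Ht) (hx : Measurable x)
    (y : ℝ → Hh) (hy : Measurable y)
    (xv : ℝ → Hv) (hxv : ∀ t ∈ I, τ < t → e₁ (xv t) = x t)
    (hInt : ∀ t ∈ I, IntegrableOn (fun s => S s t (y s)) (Ioo τ t))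
    (hMild : ∀ t ∈ I, τ < t →
      xv t = S τ t (e₂ (x τ)) + ∫ s in Ioo τ t, S s t (y s))
    -- second deterministic mild-process setting
    (e₁' : Hv' →L[ℝ] Ht') (he₁' : Function.Injective e₁') (he₁d' : DenseRange e₁')
    (e₂' : Ht' →L[ℝ] Hh') (he₂' : Function.Injective e₂') (he₂d' : DenseRange e₂')
    (S' : ℝ → ℝ → (Hh' →L[ℝ] Hv'))
    (hS_comp' : ∀ t₁ t₂ t₃, t₁ ∈ I → t₂ ∈ I → t₃ ∈ I → t₁ < t₂ → t₂ < t₃ →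
      ∀ v : Hh', S' t₂ t₃ (e₂' (e₁' (S' t₁ t₂ v))) = S' t₁ t₃ v)
    (hS_meas' : ∀ v : Hh', Measurable fun p : ℝ × ℝ => S' p.1 p.2 v)
    (x' : ℝ → Ht') (hx' : Measurable x')
    (y' : ℝ → Hh') (hy' : Measurable y')
    (xv' : ℝ → Hv') (hxv' : ∀ t ∈ I, τ < t → e₁' (xv' t) = x' t)
    (hInt' : ∀ t ∈ I, IntegrableOn (fun s => S' s t (y' s)) (Ioo τ t))
    (hMild' : ∀ t ∈ I, τ < t →
      xv' t = S' τ t (e₂' (x' τ)) + ∫ s in Ioo τ t, S' s t (y' s))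
    -- the bounded bilinear test function
    (φ : Hv →L[ℝ] Hv' →L[ℝ] V)
    (t₀ t : ℝ) (ht₀ : t₀ ∈ I) (ht : t ∈ I) (hlt : t₀ < t) :
    IntegrableOn (fun s => φ (S s t (y s)) (S' s t (e₂' (x' s)))) (Ioo t₀ t) ∧
    IntegrableOn (fun s => φ (S s t (e₂ (x s))) (S' s t (y' s))) (Ioo t₀ t) ∧
    φ (xv t) (xv' t) =
      φ (S t₀ t (e₂ (x t₀))) (S' t₀ t (e₂' (x' t₀)))
        + (∫ s in Ioo t₀ t, φ (S s t (y s)) (S' s t (e₂' (x' s))))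
        + ∫ s in Ioo t₀ t, φ (S s t (e₂ (x s))) (S' s t (y' s)) := by
    -- basic facts about the time set
  have hOC : OrdConnected I := hIconv.ordConnected
  have hτI : τ ∈ I := hτ.mem_of_isClosed ⟨t₀, ht₀⟩ hIclosed
  have hτt₀ : τ ≤ t₀ := hτ.1 ht₀
  have hmemI : ∀ s ∈ Ioo t₀ t, s ∈ I := fun s hs => hOC.out ht₀ ht ⟨hs.1.le, hs.2.le⟩
  set T : Set ℝ := Ioo t₀ t with hT
  have hTm : MeasurableSet T := measurableSet_Ioo
  set f : ℝ → Hv := fun s => S s t (y s) with hfdef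
  set f' : ℝ → Hv' := fun s => S' s t (y' s) with hf'def
  set A : Hv := S t₀ t (e₂ (x t₀)) with hA
  set A' : Hv' := S' t₀ t (e₂' (x' t₀)) with hA'
  have hf : IntegrableOn f T := (hInt t ht).mono_set (Ioo_subset_Ioo_left hτt₀)
  have hf' : IntegrableOn f' T := (hInt' t ht).mono_set (Ioo_subset_Ioo_left hτt₀)
  set g : ℝ → Hv := fun s => ∫ r in Ioo t₀ s, f r with hg
  set g' : ℝ → Hv' := fun s => ∫ r in Ioo t₀ s, f' r with hg'
  -- mild identities restarted at t₀ (and at interior times s)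
  have hmainA : xv t = A + ∫ s in T, f s :=
    mild_aux_restart I τ e₁ e₂ S hS_comp x y xv hOC hxv hInt hMild hτI ht₀ ht hτt₀ hlt
  have hmainA' : xv' t = A' + ∫ s in T, f' s :=
    mild_aux_restart I τ e₁' e₂' S' hS_comp' x' y' xv' hOC hxv' hInt' hMild' hτI ht₀ ht hτt₀ hlt
  have hxs : ∀ s ∈ T, S s t (e₂ (x s)) = A + g s := by
    intro s hs
    have hsI : s ∈ I := hmemI s hs
    exact mild_aux_compose I e₁ e₂ S hS_comp x y xv hOC ht₀ hsI ht hs.1 hs.2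
      (hxv s hsI (lt_of_le_of_lt hτt₀ hs.1))
      (mild_aux_restart I τ e₁ e₂ S hS_comp x y xv hOC hxv hInt hMild hτI ht₀ hsI hτt₀ hs.1)
      ((hInt s hsI).mono_set (Ioo_subset_Ioo_left hτt₀))
  have hxs' : ∀ s ∈ T, S' s t (e₂' (x' s)) = A' + g' s := by
    intro s hs
    have hsI : s ∈ I := hmemI s hs
    exact mild_aux_compose I e₁' e₂' S' hS_comp' x' y' xv' hOC ht₀ hsI ht hs.1 hs.2
      (hxv' s hsI (lt_of_le_of_lt hτt₀ hs.1))
      (mild_aux_restart I τ e₁' e₂' S' hS_comp' x' y' xv' hOC hxv' hInt' hMild' hτI ht₀ hsI hτt₀ hs.1)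
      ((hInt' s hsI).mono_set (Ioo_subset_Ioo_left hτt₀))
  -- continuity and boundedness of the primitives g, g'
  have hfIcc : IntegrableOn f (Icc t₀ t) := by
    show Integrable f (volume.restrict (Icc t₀ t))
    rwa [← Measure.restrict_congr_set Ioo_ae_eq_Icc]
  have hf'Icc : IntegrableOn f' (Icc t₀ t) := by
    show Integrable f' (volume.restrict (Icc t₀ t))
    rwa [← Measure.restrict_congr_set Ioo_ae_eq_Icc]
  have hgc : ContinuousOn g (Icc t₀ t) :=
    (intervalIntegral.continuousOn_primitive hfIcc).congr fun z _ =>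
      integral_Ioc_eq_integral_Ioo.symm
  have hg'c : ContinuousOn g' (Icc t₀ t) :=
    (intervalIntegral.continuousOn_primitive hf'Icc).congr fun z _ =>
      integral_Ioc_eq_integral_Ioo.symm
  have hgb : ∀ s ∈ Icc t₀ t, ‖g s‖ ≤ ∫ r in T, ‖f r‖ := by
    intro s hs
    refine (norm_integral_le_integral_norm _).trans ?_
    exact setIntegral_mono_set hf.norm (ae_of_all _ fun r => norm_nonneg _)
      (HasSubset.Subset.eventuallyLE (Ioo_subset_Ioo_right hs.2))
  have hg'b : ∀ s ∈ Icc t₀ t, ‖g' s‖ ≤ ∫ r in T, ‖f' r‖ := by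
    intro s hs
    refine (norm_integral_le_integral_norm _).trans ?_
    exact setIntegral_mono_set hf'.norm (ae_of_all _ fun r => norm_nonneg _)
      (HasSubset.Subset.eventuallyLE (Ioo_subset_Ioo_right hs.2))
  have hgm : AEStronglyMeasurable g (volume.restrict T) :=
    (hgc.mono Ioo_subset_Icc_self).aestronglyMeasurable hTm
  have hg'm : AEStronglyMeasurable g' (volume.restrict T) :=
    (hg'c.mono Ioo_subset_Icc_self).aestronglyMeasurable hTm
  have hφc : Continuous (fun p : Hv × Hv' => φ p.1 p.2) := φ.continuous₂
  -- integrability of the four pieces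
  have hI1a : Integrable (fun s => φ (f s) A') (volume.restrict T) :=
    (φ.flip A').integrable_comp hf
  have hI2a : Integrable (fun s => φ A (f' s)) (volume.restrict T) :=
    (φ A).integrable_comp hf'
  have hI1b : Integrable (fun s => φ (f s) (g' s)) (volume.restrict T) := by
    refine Integrable.mono' (hf.norm.const_mul (‖φ‖ * ∫ r in T, ‖f' r‖)) ?_ ?_
    · exact hφc.comp_aestronglyMeasurable (hf.1.prodMk hg'm)
    · filter_upwards [ae_restrict_mem hTm] with s hs
      calc ‖φ (f s) (g' s)‖ ≤ ‖φ‖ * ‖f s‖ * ‖g' s‖ := φ.le_opNorm₂ _ _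
        _ ≤ ‖φ‖ * ‖f s‖ * ∫ r in T, ‖f' r‖ := by
            exact mul_le_mul_of_nonneg_left (hg'b s (Ioo_subset_Icc_self hs))
              (by positivity)
        _ = ‖φ‖ * (∫ r in T, ‖f' r‖) * ‖f s‖ := by ring
  have hI2b : Integrable (fun s => φ (g s) (f' s)) (volume.restrict T) := by
    refine Integrable.mono' (hf'.norm.const_mul (‖φ‖ * ∫ r in T, ‖f r‖)) ?_ ?_
    · exact hφc.comp_aestronglyMeasurable (hgm.prodMk hf'.1)
    · filter_upwards [ae_restrict_mem hTm] with s hs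
      calc ‖φ (g s) (f' s)‖ ≤ ‖φ‖ * ‖g s‖ * ‖f' s‖ := φ.le_opNorm₂ _ _
        _ ≤ ‖φ‖ * (∫ r in T, ‖f r‖) * ‖f' s‖ := by
            refine mul_le_mul_of_nonneg_right ?_ (norm_nonneg _)
            exact mul_le_mul_of_nonneg_left (hgb s (Ioo_subset_Icc_self hs))
              (by positivity)
  have hu1 : Integrable (fun s => φ (f s) (A' + g' s)) (volume.restrict T) := by
    refine (hI1a.add hI1b).congr (ae_of_all _ fun s => ?_)
    simp [map_add]
  have hu2 : Integrable (fun s => φ (A + g s) (f' s)) (volume.restrict T) := by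
    refine (hI2a.add hI2b).congr (ae_of_all _ fun s => ?_)
    simp [map_add, ContinuousLinearMap.add_apply]
  have conj1 : IntegrableOn (fun s => φ (S s t (y s)) (S' s t (e₂' (x' s)))) T :=
    IntegrableOn.congr_fun hu1 (fun s hs => by simp only [hxs' s hs, hfdef]) hTm
  have conj2 : IntegrableOn (fun s => φ (S s t (e₂ (x s))) (S' s t (y' s))) T :=
    IntegrableOn.congr_fun hu2 (fun s hs => by simp only [hxs s hs, hf'def]) hTm
  refine ⟨conj1, conj2, ?_⟩
  -- the Fubini step
  have key : φ (∫ s in T, f s) (∫ s in T, f' s)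
      = (∫ s in T, φ (g s) (f' s)) + ∫ s in T, φ (f s) (g' s) := by
    set μT : Measure ℝ := volume.restrict T with hμT
    set E : Set (ℝ × ℝ) := {p : ℝ × ℝ | p.1 < p.2} with hE
    have hEm : MeasurableSet E := measurableSet_lt measurable_fst measurable_snd
    set F : ℝ × ℝ → V := fun p => φ (f p.1) (f' p.2) with hFdef
    have hFm : AEStronglyMeasurable F (μT.prod μT) :=
      hφc.comp_aestronglyMeasurable ((hf.1.comp_fst).prodMk (hf'.1.comp_snd))
    have hFi : Integrable F (μT.prod μT) := by
      refine Integrable.mono' ((hf.norm.mul_prod hf'.norm).const_mul ‖φ‖) hFm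
        (ae_of_all _ fun p => ?_)
      calc ‖F p‖ ≤ ‖φ‖ * ‖f p.1‖ * ‖f' p.2‖ := φ.le_opNorm₂ _ _
        _ = ‖φ‖ * (‖f p.1‖ * ‖f' p.2‖) := by ring
    have hHi : Integrable (E.indicator F) (μT.prod μT) := hFi.indicator hEm
    have hKi : Integrable (Eᶜ.indicator F) (μT.prod μT) := hFi.indicator hEm.compl
    have step1 : φ (∫ s in T, f s) (∫ s in T, f' s) = ∫ p, F p ∂(μT.prod μT) := by
      rw [MeasureTheory.integral_prod _ hFi]
      have e1 : ∀ s : ℝ, (∫ r, F (s, r) ∂μT) = φ (f s) (∫ s in T, f' s) := fun s =>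
        (φ (f s)).integral_comp_comm hf'
      simp_rw [e1]
      exact ((φ.flip (∫ s in T, f' s)).integral_comp_comm hf).symm
    have stepK : (∫ p, Eᶜ.indicator F p ∂(μT.prod μT)) = ∫ s in T, φ (f s) (g' s) := by
      rw [MeasureTheory.integral_prod _ hKi, hμT]
      refine setIntegral_congr_fun hTm fun s hs => ?_
      have h1 : (fun r => Eᶜ.indicator F (s, r))
          = (Iic s).indicator (fun r => φ (f s) (f' r)) := by
        funext r
        by_cases h : s < r
        · simp [hE, hFdef, Set.indicator_apply, h, not_le.2 h]
        · simp [hE, hFdef, Set.indicator_apply, h, not_lt.1 h]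
      rw [h1, setIntegral_indicator measurableSet_Iic]
      have h2 : T ∩ Iic s = Ioc t₀ s := by
        ext r
        simp only [hT, Set.mem_inter_iff, Set.mem_Ioo, Set.mem_Ioc, Set.mem_Iic]
        constructor
        · rintro ⟨⟨h1', _⟩, h3⟩; exact ⟨h1', h3⟩
        · rintro ⟨h1', h3⟩; exact ⟨⟨h1', h3.trans_lt hs.2⟩, h3⟩
      rw [h2, integral_Ioc_eq_integral_Ioo]
      exact (φ (f s)).integral_comp_comm (hf'.mono_set (Ioo_subset_Ioo_right hs.2.le))
    have stepH : (∫ p, E.indicator F p ∂(μT.prod μT)) = ∫ s in T, φ (g s) (f' s) := by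
      rw [MeasureTheory.integral_prod_symm _ hHi, hμT]
      refine setIntegral_congr_fun hTm fun r hr => ?_
      have h1 : (fun s => E.indicator F (s, r))
          = (Iio r).indicator (fun s => φ (f s) (f' r)) := by
        funext s
        by_cases h : s < r
        · simp [hE, hFdef, Set.indicator_apply, h]
        · simp [hE, hFdef, Set.indicator_apply, h]
      rw [h1, setIntegral_indicator measurableSet_Iio]
      have h2 : T ∩ Iio r = Ioo t₀ r := by
        ext s
        simp only [hT, Set.mem_inter_iff, Set.mem_Ioo, Set.mem_Iio]
        constructor
        · rintro ⟨⟨h1', _⟩, h3⟩; exact ⟨h1', h3⟩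
        · rintro ⟨h1', h3⟩; exact ⟨⟨h1', h3.trans hr.2⟩, h3⟩
      rw [h2]
      exact (φ.flip (f' r)).integral_comp_comm (hf.mono_set (Ioo_subset_Ioo_right hr.2.le))
    calc φ (∫ s in T, f s) (∫ s in T, f' s) = ∫ p, F p ∂(μT.prod μT) := step1
      _ = ∫ p, (E.indicator F + Eᶜ.indicator F) p ∂(μT.prod μT) := by
          rw [Set.indicator_self_add_compl]
      _ = (∫ p, E.indicator F p ∂(μT.prod μT)) + ∫ p, Eᶜ.indicator F p ∂(μT.prod μT) := by
          exact integral_add hHi hKi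
      _ = (∫ s in T, φ (g s) (f' s)) + ∫ s in T, φ (f s) (g' s) := by rw [stepH, stepK]
  -- assembling the final identity
  have eqC : (∫ s in T, φ (f s) A') = φ (∫ s in T, f s) A' :=
    (φ.flip A').integral_comp_comm hf
  have eqD : (∫ s in T, φ A (f' s)) = φ A (∫ s in T, f' s) :=
    (φ A).integral_comp_comm hf'
  have eqA : (∫ s in T, φ (S s t (y s)) (S' s t (e₂' (x' s))))
      = (∫ s in T, φ (f s) A') + ∫ s in T, φ (f s) (g' s) := by
    rw [← integral_add hI1a hI1b]
    refine setIntegral_congr_fun hTm fun s hs => ?_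
    simp only [hxs' s hs, hfdef, map_add]
  have eqB : (∫ s in T, φ (S s t (e₂ (x s))) (S' s t (y' s)))
      = (∫ s in T, φ A (f' s)) + ∫ s in T, φ (g s) (f' s) := by
    rw [← integral_add hI2a hI2b]
    refine setIntegral_congr_fun hTm fun s hs => ?_
    simp only [hxs s hs, hf'def, map_add, ContinuousLinearMap.add_apply]
  rw [hmainA, hmainA']
  simp only [map_add, ContinuousLinearMap.add_apply]
  rw [eqA, eqB, eqC, eqD, key]
  abel
end

section
/- Restart property of mild processes (Proposition 1, deterministic case). In the deterministic mild-process setting, for all t₁, t₂ ∈ I with t₁ < t₂ one has ∫_{t₁}^{t₂} ‖S_{s,t₂} y_s‖_{Ȟ} ds < ∞ and x_{t₂} = S_{t₁,t₂} x_{t₁} + ∫_{t₁}^{t₂} S_{s,t₂} y_s ds (a Bochner integral in Ȟ). -/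
open MeasureTheory Set

/-- **Restart property of mild processes** (Proposition 1, deterministic case).
In the deterministic mild-process setting, for all `t₁ < t₂` in `I` the map
`s ↦ S_{s,t₂} y_s` is Bochner integrable on `(t₁,t₂)` and
`x_{t₂} = S_{t₁,t₂} x_{t₁} + ∫_{t₁}^{t₂} S_{s,t₂} y_s ds`. -/
theorem mild_process_restart
    {Hv Ht Hh : Type*}
    [NormedAddCommGroup Hv] [InnerProductSpace ℝ Hv] [CompleteSpace Hv]
    [SecondCountableTopology Hv] [MeasurableSpace Hv] [BorelSpace Hv]
    [NormedAddCommGroup Ht] [InnerProductSpace ℝ Ht] [CompleteSpace Ht]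
    [SecondCountableTopology Ht] [MeasurableSpace Ht] [BorelSpace Ht]
    [NormedAddCommGroup Hh] [InnerProductSpace ℝ Hh] [CompleteSpace Hh]
    [SecondCountableTopology Hh] [MeasurableSpace Hh] [BorelSpace Hh]
    -- the time set `I ⊆ [0,∞)`, closed and convex with nonempty interior, and `τ = inf I`
    (I : Set ℝ) (hI0 : I ⊆ Ici (0 : ℝ)) (hIclosed : IsClosed I)
    (hIconv : Convex ℝ I) (hIint : (interior I).Nonempty)
    (τ : ℝ) (hτ : IsGLB I τ)
    -- continuous dense embeddings `Ȟ ⊆ H̃ ⊆ Ĥ`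
    (e₁ : Hv →L[ℝ] Ht) (he₁ : Function.Injective e₁) (he₁d : DenseRange e₁)
    (e₂ : Ht →L[ℝ] Hh) (he₂ : Function.Injective e₂) (he₂d : DenseRange e₂)
    -- the semigroup `S`
    (S : ℝ → ℝ → (Hh →L[ℝ] Hv))
    (hS_comp : ∀ t₁ t₂ t₃, t₁ ∈ I → t₂ ∈ I → t₃ ∈ I → t₁ < t₂ → t₂ < t₃ →
      ∀ v : Hh, S t₂ t₃ (e₂ (e₁ (S t₁ t₂ v))) = S t₁ t₃ v)
    (hS_meas : ∀ v : Hh, Measurable fun p : ℝ × ℝ => S p.1 p.2 v)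
    -- the mild process `x` with mild drift `y`; `xv t` realizes `x t ∈ Ȟ` for `t > τ`
    (x : ℝ → Ht) (hx : Measurable x)
    (y : ℝ → Hh) (hy : Measurable y)
    (xv : ℝ → Hv) (hxv : ∀ t ∈ I, τ < t → e₁ (xv t) = x t)
    (hInt : ∀ t ∈ I, IntegrableOn (fun s => S s t (y s)) (Ioo τ t))
    (hMild : ∀ t ∈ I, τ < t →
      xv t = S τ t (e₂ (x τ)) + ∫ s in Ioo τ t, S s t (y s))
    (t₁ t₂ : ℝ) (ht₁ : t₁ ∈ I) (ht₂ : t₂ ∈ I) (hlt : t₁ < t₂) :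
    IntegrableOn (fun s => S s t₂ (y s)) (Ioo t₁ t₂) ∧
    xv t₂ = S t₁ t₂ (e₂ (x t₁)) + ∫ s in Ioo t₁ t₂, S s t₂ (y s) := by
  have hτle : τ ≤ t₁ := hτ.1 ht₁
  have hτmem : τ ∈ I := hIclosed.closure_subset (hτ.mem_closure ⟨t₁, ht₁⟩)
  have hIcc : Icc τ t₂ ⊆ I := hIconv.ordConnected.out hτmem ht₂
  have hInt2 : IntegrableOn (fun s => S s t₂ (y s)) (Ioo t₁ t₂) :=
    (hInt t₂ ht₂).mono_set (Ioo_subset_Ioo_left hτle)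
  refine ⟨hInt2, ?_⟩
  rcases eq_or_lt_of_le hτle with h | h
  · subst h
    exact hMild t₂ ht₂ (lt_of_le_of_lt hτle hlt)
  -- case τ < t₁
  have hInt1 : IntegrableOn (fun s => S s t₂ (y s)) (Ioo τ t₁) :=
    (hInt t₂ ht₂).mono_set (Ioo_subset_Ioo_right hlt.le)
  have hIntIco : IntegrableOn (fun s => S s t₂ (y s)) (Ico t₁ t₂) := by
    have : IntegrableOn (fun s => S s t₂ (y s)) (Ioo t₁ t₂ ∪ {t₁}) :=
      hInt2.union ((integrableOn_singleton_iff).mpr (Or.inr (by simp)))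
    exact this.mono_set (by
      intro s hs
      rcases eq_or_lt_of_le hs.1 with h' | h'
      · exact Or.inr (by simp [h'.symm])
      · exact Or.inl ⟨h', hs.2⟩)
  have hsplit : (∫ s in Ioo τ t₂, S s t₂ (y s))
      = (∫ s in Ioo τ t₁, S s t₂ (y s)) + ∫ s in Ioo t₁ t₂, S s t₂ (y s) := by
    rw [← Ioo_union_Ico_eq_Ioo h hlt.le,
      setIntegral_union ?_ measurableSet_Ico hInt1 hIntIco,
      integral_Ico_eq_integral_Ioo]
    · rw [Set.disjoint_left]
      rintro s ⟨_, hs2⟩ ⟨hs3, _⟩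
      exact absurd hs3 (not_le.mpr hs2)
  -- compose with the continuous linear map L = S t₁ t₂ ∘ e₂ ∘ e₁
  set L : Hv →L[ℝ] Hv := (S t₁ t₂).comp (e₂.comp e₁) with hL
  have hrestart : (S t₁ t₂) (e₂ (x t₁))
      = S τ t₂ (e₂ (x τ)) + ∫ s in Ioo τ t₁, S s t₂ (y s) := by
    have hx1 : e₂ (x t₁) = e₂ (e₁ (xv t₁)) := by rw [hxv t₁ ht₁ h]
    have : (S t₁ t₂) (e₂ (x t₁)) = L (xv t₁) := by simp [hL, hx1]
    rw [this, hMild t₁ ht₁ h, map_add]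
    congr 1
    · have := hS_comp τ t₁ t₂ hτmem ht₁ ht₂ h hlt (e₂ (x τ))
      simpa [hL] using this
    · rw [hL, ← ContinuousLinearMap.integral_comp_comm _ (hInt t₁ ht₁)]
      refine setIntegral_congr_fun measurableSet_Ioo fun s hs => ?_
      have hsI : s ∈ I := hIcc ⟨hs.1.le.trans' le_rfl, hs.2.le.trans hlt.le⟩
      simpa using hS_comp s t₁ t₂ hsI ht₁ ht₂ hs.2 hlt (y s)
  rw [hMild t₂ ht₂ (h.trans hlt), hsplit, hrestart, add_assoc]
end

section
/- Lemma (an embedding for probability measures): smooth test functions with bounded support determine a probability measure on a separable Hilbert space. Let H and V be separable real Hilbert spaces with V ≠ {0}, and let μ₁, μ₂ be Borel probability measures on H such that ∫_H φ(x) μ₁(dx) = ∫_H φ(x) μ₂(dx) (Bochner integrals in V) for every function φ : H → V which is infinitely often Fréchet differentiable, bounded, and vanishes outside some bounded subset of H. Then μ₁ = μ₂. -/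
open MeasureTheory

section auxiliary

open Metric Set

noncomputable def auxBump {H : Type*} [NormedAddCommGroup H] [InnerProductSpace ℝ H]
    (p : H × ℝ) (k : ℕ) (x : H) : ℝ :=
  1 - Real.smoothTransition ((‖x - p.1‖ ^ 2 - p.2 ^ 2) /
      ((p.2 + ((k : ℝ) + 1)⁻¹) ^ 2 - p.2 ^ 2))

variable {H : Type*} [NormedAddCommGroup H] [InnerProductSpace ℝ H]

lemma auxBump_mem_Icc (p : H × ℝ) (k : ℕ) (x : H) : auxBump p k x ∈ Icc (0:ℝ) 1 := by
  unfold auxBump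
  constructor
  · linarith [Real.smoothTransition.le_one ((‖x - p.1‖ ^ 2 - p.2 ^ 2) /
      ((p.2 + ((k : ℝ) + 1)⁻¹) ^ 2 - p.2 ^ 2))]
  · linarith [Real.smoothTransition.nonneg ((‖x - p.1‖ ^ 2 - p.2 ^ 2) /
      ((p.2 + ((k : ℝ) + 1)⁻¹) ^ 2 - p.2 ^ 2))]

lemma auxBump_eq_one (p : H × ℝ) (k : ℕ) (x : H) (hr : 0 ≤ p.2)
    (hx : dist x p.1 ≤ p.2) : auxBump p k x = 1 := by
  have hε : (0:ℝ) < ((k : ℝ) + 1)⁻¹ := by positivity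
  have hden : (0:ℝ) < (p.2 + ((k : ℝ) + 1)⁻¹) ^ 2 - p.2 ^ 2 := by nlinarith
  have hnum : ‖x - p.1‖ ^ 2 - p.2 ^ 2 ≤ 0 := by
    rw [← dist_eq_norm]
    nlinarith [dist_nonneg (x := x) (y := p.1)]
  have : Real.smoothTransition ((‖x - p.1‖ ^ 2 - p.2 ^ 2) /
      ((p.2 + ((k : ℝ) + 1)⁻¹) ^ 2 - p.2 ^ 2)) = 0 :=
    Real.smoothTransition.zero_of_nonpos (div_nonpos_of_nonpos_of_nonneg hnum hden.le)
  unfold auxBump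
  rw [this]; ring

lemma auxBump_eq_zero (p : H × ℝ) (k : ℕ) (x : H) (hr : 0 ≤ p.2)
    (hx : p.2 + ((k : ℝ) + 1)⁻¹ ≤ dist x p.1) : auxBump p k x = 0 := by
  have hε : (0:ℝ) < ((k : ℝ) + 1)⁻¹ := by positivity
  have hden : (0:ℝ) < (p.2 + ((k : ℝ) + 1)⁻¹) ^ 2 - p.2 ^ 2 := by nlinarith
  have hnum : (p.2 + ((k : ℝ) + 1)⁻¹) ^ 2 - p.2 ^ 2 ≤ ‖x - p.1‖ ^ 2 - p.2 ^ 2 := by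
    rw [← dist_eq_norm]
    nlinarith [dist_nonneg (x := x) (y := p.1)]
  have : Real.smoothTransition ((‖x - p.1‖ ^ 2 - p.2 ^ 2) /
      ((p.2 + ((k : ℝ) + 1)⁻¹) ^ 2 - p.2 ^ 2)) = 1 :=
    Real.smoothTransition.one_of_one_le ((one_le_div hden).2 hnum)
  unfold auxBump
  rw [this]; ring

lemma auxBump_contDiff (p : H × ℝ) (k : ℕ) :
    ContDiff ℝ (⊤ : ℕ∞) (fun x => auxBump p k x) := by
  unfold auxBump
  refine contDiff_const.sub (Real.smoothTransition.contDiff.comp ?_)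
  exact ((((contDiff_id.sub contDiff_const).norm_sq ℝ)).sub contDiff_const).div_const _

noncomputable def auxProd (l : List (H × ℝ)) (k : ℕ) (x : H) : ℝ :=
  (l.map fun p => auxBump p k x).prod

lemma auxProd_contDiff (l : List (H × ℝ)) (k : ℕ) :
    ContDiff ℝ (⊤ : ℕ∞) (auxProd l k) := by
  induction l with
  | nil =>
    have : auxProd ([] : List (H × ℝ)) k = fun _ => (1:ℝ) := by funext x; simp [auxProd]
    rw [this]; exact contDiff_const
  | cons p l ih =>
    have : auxProd (p :: l) k = fun x => auxBump p k x * auxProd l k x := by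
      funext x; simp [auxProd]
    rw [this]
    exact (auxBump_contDiff p k).mul ih

lemma auxProd_mem_Icc (l : List (H × ℝ)) (k : ℕ) (x : H) :
    auxProd l k x ∈ Icc (0:ℝ) 1 := by
  induction l with
  | nil => simp [auxProd]
  | cons p l ih =>
    have hb := auxBump_mem_Icc p k x
    have : auxProd (p :: l) k x = auxBump p k x * auxProd l k x := by simp [auxProd]
    rw [this]
    exact ⟨mul_nonneg hb.1 ih.1, mul_le_one₀ hb.2 ih.1 ih.2⟩

lemma auxProd_eq_zero {l : List (H × ℝ)} {p : H × ℝ} (hp : p ∈ l) (k : ℕ) {x : H}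
    (hb : auxBump p k x = 0) : auxProd l k x = 0 :=
  List.prod_eq_zero (List.mem_map.2 ⟨p, hp, hb⟩)

lemma auxProd_eq_one {l : List (H × ℝ)} (k : ℕ) {x : H}
    (hb : ∀ p ∈ l, auxBump p k x = 1) : auxProd l k x = 1 :=
  List.prod_eq_one (by intro a ha; obtain ⟨p, hp, rfl⟩ := List.mem_map.1 ha; exact hb p hp)

end auxiliary

/-- **Lemma (an embedding for probability measures)**: smooth bounded test functions vanishing
outside a bounded set determine a Borel probability measure on a separable Hilbert space.
If `V ≠ {0}` and `∫ φ dμ₁ = ∫ φ dμ₂` for every infinitely Fréchet differentiable, bounded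
`φ : H → V` vanishing outside a bounded set, then `μ₁ = μ₂`. -/
theorem measure_ext_of_smooth_boundedSupport
    {H V : Type*}
    [NormedAddCommGroup H] [InnerProductSpace ℝ H] [CompleteSpace H]
    [SecondCountableTopology H] [MeasurableSpace H] [BorelSpace H]
    [NormedAddCommGroup V] [InnerProductSpace ℝ V] [CompleteSpace V]
    [SecondCountableTopology V]
    (hV : ∃ v : V, v ≠ 0)
    (μ₁ μ₂ : Measure H) [IsProbabilityMeasure μ₁] [IsProbabilityMeasure μ₂]
    (h : ∀ φ : H → V, ContDiff ℝ (⊤ : ℕ∞) φ →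
      (∃ C : ℝ, ∀ x : H, ‖φ x‖ ≤ C) →
      (∃ R : ℝ, 0 < R ∧ ∀ x : H, R < ‖x‖ → φ x = 0) →
      ∫ x, φ x ∂μ₁ = ∫ x, φ x ∂μ₂) :
    μ₁ = μ₂ := by
  classical
  obtain ⟨v, hv⟩ := hV
  -- Step 1: scalar test functions also have equal integrals.
  have hscalar : ∀ f : H → ℝ, ContDiff ℝ (⊤ : ℕ∞) f → (∃ C : ℝ, ∀ x, ‖f x‖ ≤ C) →
      (∃ R : ℝ, 0 < R ∧ ∀ x, R < ‖x‖ → f x = 0) → ∫ x, f x ∂μ₁ = ∫ x, f x ∂μ₂ := by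
    rintro f hf ⟨C, hC⟩ ⟨R, hR, hRf⟩
    have key := h (fun x => f x • v) (hf.smul contDiff_const)
      ⟨C * ‖v‖, fun x => by
        rw [norm_smul]
        exact mul_le_mul_of_nonneg_right (hC x) (norm_nonneg v)⟩
      ⟨R, hR, fun x hx => by show f x • v = 0; rw [hRf x hx, zero_smul]⟩
    rw [integral_smul_const, integral_smul_const] at key
    exact smul_left_injective ℝ hv key
  -- The π-system of finite intersections of closed balls with nonnegative radii.
  set S : Set (Set H) := {s | ∃ l : List (H × ℝ), l ≠ [] ∧ (∀ p ∈ l, 0 ≤ p.2) ∧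
      s = ⋂ p ∈ l, Metric.closedBall p.1 p.2} with hS
  have hSmeas : ∀ l : List (H × ℝ),
      MeasurableSet (⋂ p ∈ l, Metric.closedBall p.1 p.2) := fun l =>
    MeasurableSet.biInter (List.finite_toSet l).countable fun p _ => measurableSet_closedBall
  -- It generates the Borel σ-algebra.
  have hgen : (inferInstance : MeasurableSpace H) = MeasurableSpace.generateFrom S := by
    rw [BorelSpace.measurable_eq (α := H)]
    refine le_antisymm ?_ (MeasurableSpace.generateFrom_le ?_)
    · refine MeasurableSpace.generateFrom_le ?_
      intro U hU
      replace hU : IsOpen U := hU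
      obtain ⟨D, hDc, hDd⟩ := TopologicalSpace.exists_countable_dense H
      have hUeq : U = ⋃ d ∈ D, ⋃ q : ℚ,
          ⋃ _ : 0 < (q:ℝ) ∧ Metric.closedBall d (q:ℝ) ⊆ U, Metric.closedBall d (q:ℝ) := by
        apply Set.Subset.antisymm
        · intro x hx
          obtain ⟨ε, hε, hball⟩ := Metric.isOpen_iff.1 hU x hx
          obtain ⟨d, hd, hdist⟩ := hDd.exists_dist_lt x (show (0:ℝ) < ε/4 by linarith)
          obtain ⟨q, hq1, hq2⟩ := exists_rat_btwn (show ε/4 < ε/2 by linarith)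
          refine Set.mem_iUnion₂.2 ⟨d, hd, Set.mem_iUnion.2 ⟨q, Set.mem_iUnion.2
            ⟨⟨by linarith, fun y hy => ?_⟩, ?_⟩⟩⟩
          · apply hball
            rw [Metric.mem_ball]
            have h1 : dist y x ≤ dist y d + dist d x := dist_triangle _ _ _
            rw [Metric.mem_closedBall] at hy
            rw [dist_comm] at hdist
            linarith
          · rw [Metric.mem_closedBall]
            linarith
        · exact Set.iUnion₂_subset fun d _ => Set.iUnion_subset fun q =>
            Set.iUnion_subset fun hq => hq.2
      rw [hUeq]
      refine MeasurableSet.biUnion hDc fun d _ => MeasurableSet.iUnion fun q =>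
        MeasurableSet.iUnion fun hq => ?_
      exact MeasurableSpace.measurableSet_generateFrom
        ⟨[(d, (q:ℝ))], by simp, by simp [hq.1.le], by simp⟩
    · rintro s ⟨l, -, -, rfl⟩
      rw [← BorelSpace.measurable_eq (α := H)]
      exact hSmeas l
  -- It is a π-system.
  have hpi : IsPiSystem S := by
    rintro s ⟨l₁, h₁ne, h₁r, rfl⟩ t ⟨l₂, h₂ne, h₂r, rfl⟩ -
    refine ⟨l₁ ++ l₂, by simp [h₁ne], ?_, ?_⟩
    · intro p hp
      rcases List.mem_append.1 hp with h' | h'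
      exacts [h₁r p h', h₂r p h']
    · ext x
      simp only [Set.mem_inter_iff, Set.mem_iInter, List.mem_append]
      constructor
      · rintro ⟨h1, h2⟩ p hp
        rcases hp with h' | h'
        exacts [h1 p h', h2 p h']
      · intro hx
        exact ⟨fun p hp => hx p (Or.inl hp), fun p hp => hx p (Or.inr hp)⟩
  -- The measures agree on the π-system.
  have key : ∀ s ∈ S, μ₁ s = μ₂ s := by
    rintro s ⟨l, hne, hr, rfl⟩
    -- equal integrals of the smooth approximations
    have hint : ∀ k, ∫ x, auxProd l k x ∂μ₁ = ∫ x, auxProd l k x ∂μ₂ := by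
      intro k
      obtain ⟨p₀, l', hl⟩ := List.exists_cons_of_ne_nil hne
      have hp₀ : p₀ ∈ l := by rw [hl]; exact List.mem_cons_self
      have hr₀ : 0 ≤ p₀.2 := hr p₀ hp₀
      refine hscalar _ (auxProd_contDiff l k) ⟨1, fun x => ?_⟩
        ⟨‖p₀.1‖ + p₀.2 + 1, by linarith [norm_nonneg p₀.1], fun x hx => ?_⟩
      · rw [Real.norm_eq_abs, abs_le]
        have := auxProd_mem_Icc l k x
        exact ⟨by linarith [this.1], this.2⟩
      · refine auxProd_eq_zero hp₀ k (auxBump_eq_zero p₀ k x hr₀ ?_)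
        have h1 : ((k:ℝ) + 1)⁻¹ ≤ 1 := by
          apply inv_le_one_of_one_le₀
          have : (0:ℝ) ≤ (k:ℝ) := Nat.cast_nonneg k
          linarith
        have h2 : ‖x‖ - ‖p₀.1‖ ≤ ‖x - p₀.1‖ := norm_sub_norm_le x p₀.1
        rw [dist_eq_norm]
        linarith
    -- pointwise convergence to the indicator, hence convergence of integrals
    have htend : ∀ ν : Measure H, IsProbabilityMeasure ν →
        Filter.Tendsto (fun k => ∫ x, auxProd l k x ∂ν) Filter.atTop
          (nhds (∫ x, (⋂ p ∈ l, Metric.closedBall p.1 p.2).indicator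
            (1 : H → ℝ) x ∂ν)) := by
      intro ν hν
      refine tendsto_integral_of_dominated_convergence (fun _ => (1:ℝ))
        (fun k => ((auxProd_contDiff l k).continuous).aestronglyMeasurable)
        (integrable_const 1) (fun k => Filter.Eventually.of_forall fun x => ?_)
        (Filter.Eventually.of_forall fun x => ?_)
      · have hmem := auxProd_mem_Icc l k x
        have : ‖auxProd l k x‖ ≤ 1 := by
          rw [Real.norm_eq_abs, abs_le]
          exact ⟨by linarith [hmem.1], hmem.2⟩
        simpa using this
      · by_cases hx : x ∈ ⋂ p ∈ l, Metric.closedBall p.1 p.2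
        · rw [Set.indicator_of_mem hx]
          simp only [Pi.one_apply]
          have hxball : ∀ p ∈ l, dist x p.1 ≤ p.2 := by
            intro p hp
            have := Set.mem_iInter₂.1 hx p hp
            rwa [Metric.mem_closedBall] at this
          have hone : ∀ k, auxProd l k x = 1 := fun k =>
            auxProd_eq_one k fun p hp => auxBump_eq_one p k x (hr p hp) (hxball p hp)
          simp only [hone]
          exact tendsto_const_nhds
        · rw [Set.indicator_of_notMem hx]
          have : ∃ p ∈ l, p.2 < dist x p.1 := by
            by_contra hcon
            push_neg at hcon
            exact hx (Set.mem_iInter₂.2 fun p hp => Metric.mem_closedBall.2 (hcon p hp))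
          obtain ⟨p, hp, hd⟩ := this
          obtain ⟨N, hN⟩ := exists_nat_one_div_lt (show (0:ℝ) < dist x p.1 - p.2 by linarith)
          refine Filter.Tendsto.congr' ?_ (tendsto_const_nhds (x := (0:ℝ)))
          filter_upwards [Filter.eventually_ge_atTop N] with k hk
          have hkN : ((N:ℝ) + 1)⁻¹ ≥ ((k:ℝ) + 1)⁻¹ := by
            apply inv_anti₀ (by positivity)
            have : (N:ℝ) ≤ (k:ℝ) := Nat.cast_le.2 hk
            linarith
          have h1N : 1 / ((N:ℝ) + 1) = ((N:ℝ) + 1)⁻¹ := one_div _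
          refine (auxProd_eq_zero hp k (auxBump_eq_zero p k x (hr p hp) ?_)).symm
          rw [h1N] at hN
          linarith
    have h1 := htend μ₁ inferInstance
    have h2 := htend μ₂ inferInstance
    rw [show (fun k => ∫ x, auxProd l k x ∂μ₁) = (fun k => ∫ x, auxProd l k x ∂μ₂)
      from funext hint] at h1
    have heq := tendsto_nhds_unique h1 h2
    rw [MeasureTheory.integral_indicator_one (hSmeas l),
      MeasureTheory.integral_indicator_one (hSmeas l)] at heq
    exact (ENNReal.toReal_eq_toReal_iff' (measure_ne_top μ₁ _) (measure_ne_top μ₂ _)).1 heq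
  exact MeasureTheory.ext_of_generate_finite S hgen hpi key (by simp)
end

section
/- Monotonicity of the G-norms in the smoothness/growth parameters: for all real Banach spaces V₁, V₂, all integers n ≥ 0, all k ∈ {0,1,…,n}, all q ∈ [0,∞) and every φ ∈ Cⁿ(V₁,V₂), one has ‖φ‖_{G^0_{q+n}(V₁,V₂)} ≤ ‖φ‖_{G^{n−k}_{q+k}(V₁,V₂)} ≤ ‖φ‖_{G^n_q(V₁,V₂)} (inequalities in [0,∞]). -/
open scoped ENNReal NNReal

/-- The weighted norm `‖φ‖_{G^n_q} = Σ_{i=0}^{n−1} ‖φ^{(i)}(0)‖ +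
sup_v ‖φ^{(n)}(v)‖/(1+‖v‖)^q ∈ [0,∞]`. -/
noncomputable def Gnorm {V₁ V₂ : Type*} [NormedAddCommGroup V₁] [NormedSpace ℝ V₁]
    [NormedAddCommGroup V₂] [NormedSpace ℝ V₂] (n : ℕ) (q : ℝ) (φ : V₁ → V₂) : ℝ≥0∞ :=
  (∑ i ∈ Finset.range n, (‖iteratedFDeriv ℝ i φ 0‖₊ : ℝ≥0∞))
    + ⨆ v : V₁, (‖iteratedFDeriv ℝ n φ v‖₊ : ℝ≥0∞) / ENNReal.ofReal ((1 + ‖v‖) ^ q)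

lemma Gnorm_step {V₁ V₂ : Type*} [NormedAddCommGroup V₁] [NormedSpace ℝ V₁]
    [NormedAddCommGroup V₂] [NormedSpace ℝ V₂]
    (m : ℕ) (q : ℝ) (hq : 0 ≤ q) (φ : V₁ → V₂) (hφ : ContDiff ℝ (m + 1) φ) :
    Gnorm m (q + 1) φ ≤ Gnorm (m + 1) q φ := by
  rw [Gnorm, Gnorm, Finset.sum_range_succ, add_assoc]
  refine add_le_add (le_refl _) ?_
  set g := iteratedFDeriv ℝ m φ with hg
  set S := ⨆ v : V₁, (‖iteratedFDeriv ℝ (m + 1) φ v‖₊ : ℝ≥0∞)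
      / ENNReal.ofReal ((1 + ‖v‖) ^ q) with hSdef
  rcases eq_or_ne S ⊤ with hS | hS
  · rw [hS]; simp
  refine iSup_le fun v => ?_
  set C := S.toReal with hCdef
  have hC : 0 ≤ C := ENNReal.toReal_nonneg
  have hbound : ∀ w : V₁, ‖iteratedFDeriv ℝ (m + 1) φ w‖ ≤ C * (1 + ‖w‖) ^ q := by
    intro w
    have hP : (0 : ℝ) < (1 + ‖w‖) ^ q :=
      Real.rpow_pos_of_pos (by positivity) q
    have h1 : (‖iteratedFDeriv ℝ (m + 1) φ w‖₊ : ℝ≥0∞)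
        / ENNReal.ofReal ((1 + ‖w‖) ^ q) ≤ S :=
      le_iSup (fun v : V₁ => (‖iteratedFDeriv ℝ (m + 1) φ v‖₊ : ℝ≥0∞)
        / ENNReal.ofReal ((1 + ‖v‖) ^ q)) w
    have h2 : (‖iteratedFDeriv ℝ (m + 1) φ w‖₊ : ℝ≥0∞)
        ≤ S * ENNReal.ofReal ((1 + ‖w‖) ^ q) := by
      exact (ENNReal.div_le_iff_le_mul
        (Or.inl (by simp [ENNReal.ofReal_eq_zero, not_le, hP]))
        (Or.inl ENNReal.ofReal_ne_top)).mp h1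
    have h3 := ENNReal.toReal_mono (by
      exact ENNReal.mul_ne_top hS ENNReal.ofReal_ne_top) h2
    simpa [ENNReal.toReal_mul, ENNReal.toReal_ofReal hP.le] using h3
  have hdiff : Differentiable ℝ g :=
    hφ.differentiable_iteratedFDeriv (by exact_mod_cast lt_add_one m)
  have hmvt : ‖g v - g 0‖ ≤ (C * (1 + ‖v‖) ^ q) * ‖v - 0‖ := by
    refine (convex_closedBall (0 : V₁) ‖v‖).norm_image_sub_le_of_norm_fderiv_le
      (fun x _ => hdiff x) (fun x hx => ?_) ?_ ?_
    · rw [hg, norm_fderiv_iteratedFDeriv]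
      refine (hbound x).trans ?_
      have hx' : ‖x‖ ≤ ‖v‖ := by simpa using mem_closedBall_iff_norm.mp hx
      exact mul_le_mul_of_nonneg_left
        (Real.rpow_le_rpow (by positivity) (by linarith) hq) hC
    · simpa using norm_nonneg v
    · simp [mem_closedBall_iff_norm]
  have hPv : (0 : ℝ) < (1 + ‖v‖) ^ q := Real.rpow_pos_of_pos (by positivity) q
  have hP1 : (1 : ℝ) ≤ (1 + ‖v‖) ^ q :=
    Real.one_le_rpow (by linarith [norm_nonneg v]) hq
  have hreal : ‖g v‖ ≤ (‖g 0‖ + C) * (1 + ‖v‖) ^ (q + 1) := by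
    have hsplit : (1 + ‖v‖ : ℝ) ^ (q + 1) = (1 + ‖v‖) ^ q * (1 + ‖v‖) := by
      rw [Real.rpow_add_one (by positivity) q]
    have htri : ‖g v‖ ≤ ‖g 0‖ + C * (1 + ‖v‖) ^ q * ‖v‖ := by
      have := norm_sub_norm_le (g v) (g 0)
      simp only [sub_zero] at hmvt
      nlinarith [norm_nonneg (g v), norm_nonneg (g 0)]
    rw [hsplit]
    have h0 : (0 : ℝ) ≤ ‖g 0‖ := norm_nonneg _
    have e1 : ‖g 0‖ ≤ ‖g 0‖ * ((1 + ‖v‖) ^ q * (1 + ‖v‖)) :=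
      le_mul_of_one_le_right h0 (by nlinarith [norm_nonneg v])
    have e2 : C * (1 + ‖v‖) ^ q * ‖v‖ ≤ C * ((1 + ‖v‖) ^ q * (1 + ‖v‖)) := by
      nlinarith [norm_nonneg v, mul_nonneg hC hPv.le]
    have e3 : (‖g 0‖ + C) * ((1 + ‖v‖) ^ q * (1 + ‖v‖))
        = ‖g 0‖ * ((1 + ‖v‖) ^ q * (1 + ‖v‖)) + C * ((1 + ‖v‖) ^ q * (1 + ‖v‖)) := by ring
    linarith
  have key : (‖g v‖₊ : ℝ≥0∞) ≤ (↑‖g 0‖₊ + S) * ENNReal.ofReal ((1 + ‖v‖) ^ (q + 1)) := by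
    calc (‖g v‖₊ : ℝ≥0∞) = ENNReal.ofReal ‖g v‖ := (ofReal_norm _).symm
    _ ≤ ENNReal.ofReal ((‖g 0‖ + C) * (1 + ‖v‖) ^ (q + 1)) := ENNReal.ofReal_le_ofReal hreal
    _ = ENNReal.ofReal (‖g 0‖ + C) * ENNReal.ofReal ((1 + ‖v‖) ^ (q + 1)) :=
        ENNReal.ofReal_mul (by positivity)
    _ = (↑‖g 0‖₊ + S) * ENNReal.ofReal ((1 + ‖v‖) ^ (q + 1)) := by
        rw [ENNReal.ofReal_add (norm_nonneg _) hC, ofReal_norm, enorm_eq_nnnorm,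
          hCdef, ENNReal.ofReal_toReal hS]
  rw [ENNReal.div_le_iff_le_mul]
  · exact key
  · exact Or.inl (by
      simp [ENNReal.ofReal_eq_zero, not_le]
      positivity)
  · exact Or.inl ENNReal.ofReal_ne_top

lemma Gnorm_chain {V₁ V₂ : Type*} [NormedAddCommGroup V₁] [NormedSpace ℝ V₁]
    [NormedAddCommGroup V₂] [NormedSpace ℝ V₂]
    (j d : ℕ) (q : ℝ) (hq : 0 ≤ q) (φ : V₁ → V₂) (hφ : ContDiff ℝ (j + d) φ) :
    Gnorm j (q + d) φ ≤ Gnorm (j + d) q φ := by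
  induction d generalizing q with
  | zero => simp
  | succ d ih =>
    have h1 : Gnorm j (q + (d + 1 : ℕ)) φ ≤ Gnorm (j + d) (q + 1) φ := by
      have := ih (q + 1) (by linarith) (hφ.of_le (by exact_mod_cast Nat.le_succ (j + d)))
      convert this using 2
      push_cast; ring
    exact h1.trans (Gnorm_step (j + d) q hq φ (by exact_mod_cast hφ))

/-- **Monotonicity of the `G`-norms in the smoothness/growth parameters**:
for `k ≤ n`, `q ≥ 0` and `φ ∈ Cⁿ(V₁,V₂)`,
`‖φ‖_{G^0_{q+n}} ≤ ‖φ‖_{G^{n−k}_{q+k}} ≤ ‖φ‖_{G^n_q}` in `[0,∞]`. -/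
theorem Gnorm_mono {V₁ V₂ : Type*}
    [NormedAddCommGroup V₁] [NormedSpace ℝ V₁] [CompleteSpace V₁]
    [NormedAddCommGroup V₂] [NormedSpace ℝ V₂] [CompleteSpace V₂]
    (n k : ℕ) (hk : k ≤ n) (q : ℝ) (hq : 0 ≤ q)
    (φ : V₁ → V₂) (hφ : ContDiff ℝ n φ) :
    Gnorm 0 (q + n) φ ≤ Gnorm (n - k) (q + k) φ ∧
      Gnorm (n - k) (q + k) φ ≤ Gnorm n q φ := by
  constructor
  · have h := Gnorm_chain 0 (n - k) (q + k) (by positivity) φ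
      (by
        refine hφ.of_le ?_
        exact_mod_cast Nat.le_trans (by omega) (le_refl n))
    have heq : q + (k : ℝ) + ((n - k : ℕ) : ℝ) = q + n := by
      rw [Nat.cast_sub hk]; ring
    rw [heq, zero_add] at h
    exact h
  · have h := Gnorm_chain (n - k) k q hq φ (by
      exact hφ.of_le (le_of_eq (by rw [← Nat.cast_add, Nat.sub_add_cancel hk])))
    rwa [Nat.sub_add_cancel hk] at h
end

section
/- Growth estimate for intermediate derivatives: for all real Banach spaces V₁, V₂, all integers n ≥ 0, all k ∈ {0,1,…,n}, all q ∈ [0,∞), every φ ∈ Cⁿ(V₁,V₂) and every v ∈ V₁, one has ‖φ^{(k)}(v)‖_{L^{(k)}(V₁,V₂)} ≤ ‖φ‖_{G^n_q(V₁,V₂)} · (1 + ‖v‖_{V₁})^{(q+n−k)} (an inequality in [0,∞]). -/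
open scoped ENNReal NNReal

/-- **Growth estimate for intermediate derivatives**: for `k ≤ n`, `q ≥ 0`,
`φ ∈ Cⁿ(V₁,V₂)` and `v ∈ V₁`,
`‖φ^{(k)}(v)‖ ≤ ‖φ‖_{G^n_q} · (1+‖v‖)^{q+n−k}` in `[0,∞]`. -/
theorem norm_iteratedFDeriv_le_Gnorm {V₁ V₂ : Type*}
    [NormedAddCommGroup V₁] [NormedSpace ℝ V₁] [CompleteSpace V₁]
    [NormedAddCommGroup V₂] [NormedSpace ℝ V₂] [CompleteSpace V₂]
    (n k : ℕ) (hk : k ≤ n) (q : ℝ) (hq : 0 ≤ q)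
    (φ : V₁ → V₂) (hφ : ContDiff ℝ n φ) (v : V₁) :
    (‖iteratedFDeriv ℝ k φ v‖₊ : ℝ≥0∞) ≤
      Gnorm n q φ * ENNReal.ofReal ((1 + ‖v‖) ^ (q + n - k : ℝ)) := by
  have hbase : ∀ w : V₁, (0:ℝ) < 1 + ‖w‖ := fun w => by positivity
  by_cases hG : Gnorm n q φ = ⊤
  · rw [hG, ENNReal.top_mul]
    · exact le_top
    · simp [ENNReal.ofReal_eq_zero, not_le, Real.rpow_pos_of_pos (hbase v)]
  -- finite case
  set G : ℝ := (Gnorm n q φ).toReal with hGdef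
  have hG0 : 0 ≤ G := ENNReal.toReal_nonneg
  -- Fact A : bound on the top derivative
  have factA : ∀ w : V₁, ‖iteratedFDeriv ℝ n φ w‖ ≤ G * (1 + ‖w‖) ^ q := by
    intro w
    have hsup : (‖iteratedFDeriv ℝ n φ w‖₊ : ℝ≥0∞) / ENNReal.ofReal ((1 + ‖w‖) ^ q)
        ≤ Gnorm n q φ :=
      le_trans (le_iSup (fun v => (‖iteratedFDeriv ℝ n φ v‖₊ : ℝ≥0∞) /
        ENNReal.ofReal ((1 + ‖v‖) ^ q)) w) le_add_self
    have hne0 : ENNReal.ofReal ((1 + ‖w‖) ^ q) ≠ 0 := by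
      simp [ENNReal.ofReal_eq_zero, not_le, Real.rpow_pos_of_pos (hbase w)]
    have hneT : ENNReal.ofReal ((1 + ‖w‖) ^ q) ≠ ⊤ := ENNReal.ofReal_ne_top
    have hle : (‖iteratedFDeriv ℝ n φ w‖₊ : ℝ≥0∞) ≤
        Gnorm n q φ * ENNReal.ofReal ((1 + ‖w‖) ^ q) :=
      (ENNReal.div_le_iff hne0 hneT).mp hsup
    have := ENNReal.toReal_mono (by
      exact ENNReal.mul_ne_top hG hneT) hle
    simpa [ENNReal.toReal_mul, ENNReal.toReal_ofReal
      (le_of_lt (Real.rpow_pos_of_pos (hbase w) q))] using this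
  -- Fact B : bound on the lower derivatives at 0
  have factB : ∀ i < n, ‖iteratedFDeriv ℝ i φ 0‖ ≤ G := by
    intro i hi
    have h1 : (‖iteratedFDeriv ℝ i φ 0‖₊ : ℝ≥0∞) ≤
        ∑ j ∈ Finset.range n, (‖iteratedFDeriv ℝ j φ 0‖₊ : ℝ≥0∞) :=
      Finset.single_le_sum (f := fun j => (‖iteratedFDeriv ℝ j φ 0‖₊ : ℝ≥0∞)) (fun _ _ => zero_le) (Finset.mem_range.mpr hi)
    have h2 : (‖iteratedFDeriv ℝ i φ 0‖₊ : ℝ≥0∞) ≤ Gnorm n q φ := h1.trans le_self_add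
    have := ENNReal.toReal_mono hG h2
    simpa using this
  -- Main claim by induction on the gap
  have main : ∀ d j, j + d = n → ∀ w : V₁,
      ‖iteratedFDeriv ℝ j φ w‖ ≤ G * (1 + ‖w‖) ^ (q + d) := by
    intro d
    induction d with
    | zero =>
      intro j hj w
      simp only [Nat.add_zero] at hj
      subst hj
      simpa using factA w
    | succ d IH =>
      intro j hj w
      have hjn : j < n := by omega
      have hexp0 : (0:ℝ) ≤ q + d := by positivity
      have hdiff : Differentiable ℝ (iteratedFDeriv ℝ j φ) :=
        hφ.differentiable_iteratedFDeriv (by exact_mod_cast hjn)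
      set C : ℝ := G * (1 + ‖w‖) ^ (q + d) with hC
      have hball : ∀ x ∈ Metric.closedBall (0:V₁) ‖w‖,
          ‖fderiv ℝ (iteratedFDeriv ℝ j φ) x‖ ≤ C := by
        intro x hx
        rw [norm_fderiv_iteratedFDeriv]
        have hIH := IH (j + 1) (by omega) x
        refine hIH.trans ?_
        have hxw : ‖x‖ ≤ ‖w‖ := by simpa using hx
        exact mul_le_mul_of_nonneg_left
          (Real.rpow_le_rpow (le_of_lt (hbase x)) (by linarith) hexp0) hG0
      have hmvt : ‖iteratedFDeriv ℝ j φ w - iteratedFDeriv ℝ j φ 0‖ ≤ C * ‖w - 0‖ :=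
        (convex_closedBall (0:V₁) ‖w‖).norm_image_sub_le_of_norm_fderiv_le
          (fun x _ => hdiff.differentiableAt) hball
          (Metric.mem_closedBall.mpr (by simp)) (Metric.mem_closedBall.mpr (by simp))
      have h0 : ‖iteratedFDeriv ℝ j φ 0‖ ≤ G := factB j hjn
      have htri : ‖iteratedFDeriv ℝ j φ w‖ ≤ G + C * ‖w‖ := by
        have := norm_sub_norm_le (iteratedFDeriv ℝ j φ w) (iteratedFDeriv ℝ j φ 0)
        simp only [sub_zero] at hmvt
        linarith [this, hmvt, h0]
      refine htri.trans ?_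
      have hp1 : (1:ℝ) ≤ (1 + ‖w‖) ^ (q + d) :=
        Real.one_le_rpow (by linarith [norm_nonneg w]) hexp0
      have hsplit : (1 + ‖w‖) ^ (q + (d+1:ℕ)) = (1 + ‖w‖) ^ (q + d) * (1 + ‖w‖) := by
        push_cast
        rw [show q + ((d:ℝ) + 1) = (q + d) + 1 by ring,
          Real.rpow_add (hbase w), Real.rpow_one]
      rw [hsplit, hC]
      have hw0 := norm_nonneg w
      nlinarith [hp1, hw0, hG0]
  -- conclude
  have hmain := main (n - k) k (by omega) v
  have hcast : ((n - k : ℕ) : ℝ) = (n : ℝ) - k := by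
    push_cast [hk]; ring
  rw [hcast] at hmain
  have hexp : q + ((n:ℝ) - k) = q + n - k := by ring
  rw [hexp] at hmain
  calc (‖iteratedFDeriv ℝ k φ v‖₊ : ℝ≥0∞)
      = ENNReal.ofReal ‖iteratedFDeriv ℝ k φ v‖ := by rw [ofReal_norm_eq_enorm, enorm_eq_nnnorm]
    _ ≤ ENNReal.ofReal (G * (1 + ‖v‖) ^ (q + n - k : ℝ)) := ENNReal.ofReal_le_ofReal hmain
    _ = ENNReal.ofReal G * ENNReal.ofReal ((1 + ‖v‖) ^ (q + n - k : ℝ)) :=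
        ENNReal.ofReal_mul hG0
    _ = Gnorm n q φ * ENNReal.ofReal ((1 + ‖v‖) ^ (q + n - k : ℝ)) := by
        rw [hGdef, ENNReal.ofReal_toReal hG]
end

section
/- Weighted Lipschitz estimate for intermediate derivatives: for all real Banach spaces V₁, V₂, all integers n ≥ 0, all k ∈ {0,1,…,n}, all q ∈ [0,∞), every φ ∈ Cⁿ(V₁,V₂) and all v, w ∈ V₁, one has ‖φ^{(k)}(v) − φ^{(k)}(w)‖_{L^{(k)}(V₁,V₂)} ≤ ‖φ‖_{Lip^{n+1}_q(V₁,V₂)} · (1 + max(‖v‖_{V₁}, ‖w‖_{V₁}))^{(q+n−k)} · ‖v − w‖_{V₁} (an inequality in [0,∞]). -/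
open scoped ENNReal NNReal

/-- The weighted Lipschitz norm `‖φ‖_{Lip^{n+1}_q} = Σ_{i=0}^{n} ‖φ^{(i)}(0)‖ +
sup_{v≠w} ‖φ^{(n)}(v) − φ^{(n)}(w)‖ / ((1+max(‖v‖,‖w‖))^q ‖v−w‖) ∈ [0,∞]`. -/
noncomputable def LipNorm {V₁ V₂ : Type*} [NormedAddCommGroup V₁] [NormedSpace ℝ V₁]
    [NormedAddCommGroup V₂] [NormedSpace ℝ V₂] (n : ℕ) (q : ℝ) (φ : V₁ → V₂) : ℝ≥0∞ :=
  (∑ i ∈ Finset.range (n + 1), (‖iteratedFDeriv ℝ i φ 0‖₊ : ℝ≥0∞))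
    + ⨆ (v : V₁) (w : V₁) (_ : v ≠ w),
        (‖iteratedFDeriv ℝ n φ v - iteratedFDeriv ℝ n φ w‖₊ : ℝ≥0∞) /
          ENNReal.ofReal ((1 + max ‖v‖ ‖w‖) ^ q * ‖v - w‖)

private lemma lipnorm_key {V₁ V₂ : Type*} [NormedAddCommGroup V₁] [NormedSpace ℝ V₁]
    [NormedAddCommGroup V₂] [NormedSpace ℝ V₂]
    (n : ℕ) (q : ℝ) (hq : 0 ≤ q) (φ : V₁ → V₂) (hφ : ContDiff ℝ n φ) (C : ℝ) (hC0 : 0 ≤ C)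
    (h0 : ∀ i ≤ n, ‖iteratedFDeriv ℝ i φ 0‖ ≤ C)
    (hn : ∀ x y : V₁, ‖iteratedFDeriv ℝ n φ x - iteratedFDeriv ℝ n φ y‖ ≤
      C * ((1 + max ‖x‖ ‖y‖) ^ q * ‖x - y‖)) :
    ∀ m k : ℕ, k + m = n → ∀ v w : V₁,
      ‖iteratedFDeriv ℝ k φ v - iteratedFDeriv ℝ k φ w‖ ≤
        C * ((1 + max ‖v‖ ‖w‖) ^ (q + m) * ‖v - w‖) := by
  intro m
  induction m with
  | zero =>
    intro k hkm v w
    simp only [Nat.add_zero] at hkm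
    subst hkm
    simpa using hn v w
  | succ m IH =>
    intro k hkm v w
    have hkm' : (k + 1) + m = n := by omega
    set M := max ‖v‖ ‖w‖ with hM
    have hM0 : 0 ≤ M := le_max_of_le_left (norm_nonneg v)
    have h1M : (0:ℝ) < 1 + M := by linarith
    -- bound for the (k+1)-th derivative on the ball of radius M
    have hbound : ∀ x : V₁, ‖x‖ ≤ M →
        ‖iteratedFDeriv ℝ (k + 1) φ x‖ ≤ C * (1 + M) ^ (q + (m + 1) : ℝ) := by
      intro x hx
      have h1x : (0:ℝ) < 1 + ‖x‖ := by positivity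
      have hib := IH (k + 1) hkm' x 0
      have hmax : max ‖x‖ ‖(0:V₁)‖ = ‖x‖ := by simp
      rw [hmax, sub_zero] at hib
      have hx0 : ‖iteratedFDeriv ℝ (k + 1) φ x‖ ≤
          ‖iteratedFDeriv ℝ (k + 1) φ 0‖ + C * ((1 + ‖x‖) ^ (q + m) * ‖x‖) := by
        have := norm_sub_norm_le (iteratedFDeriv ℝ (k + 1) φ x) (iteratedFDeriv ℝ (k + 1) φ 0)
        linarith
      have h00 : ‖iteratedFDeriv ℝ (k + 1) φ 0‖ ≤ C := h0 (k + 1) (by omega)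
      have hmono : (1 + ‖x‖) ^ (q + m) * ‖x‖ ≤ (1 + M) ^ (q + m) * M := by
        apply mul_le_mul _ hx (norm_nonneg x) (Real.rpow_nonneg (by linarith) _)
        exact Real.rpow_le_rpow (by positivity) (by linarith) (by positivity)
      have hstep : C + C * ((1 + M) ^ (q + m) * M) ≤ C * (1 + M) ^ (q + (m + 1) : ℝ) := by
        have hone : (1:ℝ) ≤ (1 + M) ^ (q + m) :=
          Real.one_le_rpow (by linarith) (by positivity)
        have hexp : (1 + M) ^ (q + (m + 1) : ℝ) = (1 + M) ^ (q + m) * (1 + M) := by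
          rw [← Real.rpow_add_one (ne_of_gt h1M)]
          ring_nf
        rw [hexp]
        have : (1:ℝ) + (1 + M) ^ (q + m) * M ≤ (1 + M) ^ (q + m) * (1 + M) := by nlinarith
        nlinarith
      calc ‖iteratedFDeriv ℝ (k + 1) φ x‖
          ≤ C + C * ((1 + M) ^ (q + m) * M) := by
            refine hx0.trans ?_
            gcongr
        _ ≤ C * (1 + M) ^ (q + (m + 1) : ℝ) := hstep
    -- mean value theorem on the closed ball
    have hconv : Convex ℝ (Metric.closedBall (0:V₁) M) := convex_closedBall 0 M
    have hdiff : ∀ x ∈ Metric.closedBall (0:V₁) M,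
        DifferentiableAt ℝ (iteratedFDeriv ℝ k φ) x := by
      intro x _
      exact (hφ.differentiable_iteratedFDeriv (by exact_mod_cast (by omega : k < n))) x
    have hfd : ∀ x ∈ Metric.closedBall (0:V₁) M,
        ‖fderiv ℝ (iteratedFDeriv ℝ k φ) x‖ ≤ C * (1 + M) ^ (q + (m + 1) : ℝ) := by
      intro x hx
      rw [norm_fderiv_iteratedFDeriv]
      exact hbound x (by simpa [mem_closedBall_zero_iff] using hx)
    have hvmem : v ∈ Metric.closedBall (0:V₁) M := by
      simp [mem_closedBall_zero_iff, hM]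
    have hwmem : w ∈ Metric.closedBall (0:V₁) M := by
      simp [mem_closedBall_zero_iff, hM]
    have := hconv.norm_image_sub_le_of_norm_fderiv_le hdiff hfd hwmem hvmem
    calc ‖iteratedFDeriv ℝ k φ v - iteratedFDeriv ℝ k φ w‖
        ≤ C * (1 + M) ^ (q + (m + 1) : ℝ) * ‖v - w‖ := this
      _ = C * ((1 + M) ^ (q + (m + 1) : ℝ) * ‖v - w‖) := by ring
      _ = C * ((1 + M) ^ (q + (↑(m + 1) : ℝ)) * ‖v - w‖) := by norm_num

/-- **Weighted Lipschitz estimate for intermediate derivatives**: for `k ≤ n`, `q ≥ 0`,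
`φ ∈ Cⁿ(V₁,V₂)` and `v, w ∈ V₁`,
`‖φ^{(k)}(v) − φ^{(k)}(w)‖ ≤ ‖φ‖_{Lip^{n+1}_q} · (1+max(‖v‖,‖w‖))^{q+n−k} · ‖v−w‖`
in `[0,∞]`. -/
theorem norm_iteratedFDeriv_sub_le_LipNorm {V₁ V₂ : Type*}
    [NormedAddCommGroup V₁] [NormedSpace ℝ V₁] [CompleteSpace V₁]
    [NormedAddCommGroup V₂] [NormedSpace ℝ V₂] [CompleteSpace V₂]
    (n k : ℕ) (hk : k ≤ n) (q : ℝ) (hq : 0 ≤ q)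
    (φ : V₁ → V₂) (hφ : ContDiff ℝ n φ) (v w : V₁) :
    (‖iteratedFDeriv ℝ k φ v - iteratedFDeriv ℝ k φ w‖₊ : ℝ≥0∞) ≤
      LipNorm n q φ *
        ENNReal.ofReal ((1 + max ‖v‖ ‖w‖) ^ (q + n - k : ℝ) * ‖v - w‖) := by
  rcases eq_or_ne v w with rfl | hvw
  · simp
  set N := LipNorm n q φ with hN
  have hpos : 0 < (1 + max ‖v‖ ‖w‖) ^ (q + n - k : ℝ) * ‖v - w‖ := by
    have : (0:ℝ) < ‖v - w‖ := norm_pos_iff.2 (sub_ne_zero.2 hvw)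
    have h1 : (0:ℝ) < 1 + max ‖v‖ ‖w‖ := by positivity
    positivity
  rcases eq_or_ne N ⊤ with hNt | hNt
  · rw [hNt, ENNReal.top_mul (by simpa [ENNReal.ofReal_eq_zero, not_le] using hpos)]
    exact le_top
  set C := N.toReal with hC
  have hC0 : 0 ≤ C := ENNReal.toReal_nonneg
  have h0 : ∀ i ≤ n, ‖iteratedFDeriv ℝ i φ 0‖ ≤ C := by
    intro i hi
    have h1 : (‖iteratedFDeriv ℝ i φ 0‖₊ : ℝ≥0∞) ≤ N := by
      refine le_trans ?_ (le_trans le_self_add le_rfl)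
      exact Finset.single_le_sum (f := fun i => (‖iteratedFDeriv ℝ i φ 0‖₊ : ℝ≥0∞))
        (fun _ _ => zero_le) (Finset.mem_range.2 (by omega))
    have := ENNReal.toReal_mono hNt h1
    simpa using this
  have hn : ∀ x y : V₁, ‖iteratedFDeriv ℝ n φ x - iteratedFDeriv ℝ n φ y‖ ≤
      C * ((1 + max ‖x‖ ‖y‖) ^ q * ‖x - y‖) := by
    intro x y
    rcases eq_or_ne x y with rfl | hxy
    · simp only [sub_self, norm_zero]
      have h1 : (0:ℝ) < 1 + max ‖x‖ ‖x‖ := by positivity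
      positivity
    have hb : (0:ℝ) < (1 + max ‖x‖ ‖y‖) ^ q * ‖x - y‖ := by
      have : (0:ℝ) < ‖x - y‖ := norm_pos_iff.2 (sub_ne_zero.2 hxy)
      have h1 : (0:ℝ) < 1 + max ‖x‖ ‖y‖ := by positivity
      positivity
    have hsup : (‖iteratedFDeriv ℝ n φ x - iteratedFDeriv ℝ n φ y‖₊ : ℝ≥0∞) /
        ENNReal.ofReal ((1 + max ‖x‖ ‖y‖) ^ q * ‖x - y‖) ≤ N := by
      refine le_trans ?_ le_add_self
      exact le_iSup_of_le x (le_iSup_of_le y (le_iSup_of_le hxy le_rfl))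
    have hb0 : ENNReal.ofReal ((1 + max ‖x‖ ‖y‖) ^ q * ‖x - y‖) ≠ 0 := by
      simpa [ENNReal.ofReal_eq_zero, not_le] using hb
    have hbt : ENNReal.ofReal ((1 + max ‖x‖ ‖y‖) ^ q * ‖x - y‖) ≠ ⊤ := ENNReal.ofReal_ne_top
    have hmul : (‖iteratedFDeriv ℝ n φ x - iteratedFDeriv ℝ n φ y‖₊ : ℝ≥0∞) ≤
        N * ENNReal.ofReal ((1 + max ‖x‖ ‖y‖) ^ q * ‖x - y‖) :=
      (ENNReal.div_le_iff hb0 hbt).1 hsup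
    have htr := ENNReal.toReal_mono (by
      exact ENNReal.mul_ne_top hNt ENNReal.ofReal_ne_top) hmul
    rw [ENNReal.toReal_mul, ENNReal.toReal_ofReal hb.le] at htr
    simpa using htr
  have key := lipnorm_key n q hq φ hφ C hC0 h0 hn (n - k) k (by omega) v w
  have hcast : q + ((n - k : ℕ) : ℝ) = q + n - k := by
    push_cast [Nat.cast_sub hk]
    ring
  rw [hcast] at key
  calc (‖iteratedFDeriv ℝ k φ v - iteratedFDeriv ℝ k φ w‖₊ : ℝ≥0∞)
      = ENNReal.ofReal ‖iteratedFDeriv ℝ k φ v - iteratedFDeriv ℝ k φ w‖ :=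
        (ofReal_norm_eq_enorm _).symm
    _ ≤ ENNReal.ofReal (C * ((1 + max ‖v‖ ‖w‖) ^ (q + n - k : ℝ) * ‖v - w‖)) :=
        ENNReal.ofReal_le_ofReal key
    _ = ENNReal.ofReal C * ENNReal.ofReal ((1 + max ‖v‖ ‖w‖) ^ (q + n - k : ℝ) * ‖v - w‖) :=
        ENNReal.ofReal_mul hC0
    _ = N * ENNReal.ofReal ((1 + max ‖v‖ ‖w‖) ^ (q + n - k : ℝ) * ‖v - w‖) := by
        rw [hC, ENNReal.ofReal_toReal hNt]
end

section
/- Coincidence of the G-norm and the Lip-norm of top order: for all real Banach spaces V₁, V₂, every integer m ≥ 1, every q ∈ [0,∞) and every φ ∈ C^m(V₁,V₂), one has ‖φ‖_{G^m_q(V₁,V₂)} = ‖φ‖_{Lip^m_q(V₁,V₂)} (an equality in [0,∞]). Equivalently, sup_{v∈V₁} ‖φ^{(m)}(v)‖/(1+‖v‖)^q equals the weighted Lipschitz constant sup_{v≠w} ‖φ^{(m−1)}(v) − φ^{(m−1)}(w)‖ / ((1+max(‖v‖,‖w‖))^q ‖v−w‖). -/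
open scoped ENNReal NNReal Topology
open Filter


section Aux
variable {V₁ V₂ : Type*} [NormedAddCommGroup V₁] [NormedSpace ℝ V₁]
  [NormedAddCommGroup V₂] [NormedSpace ℝ V₂]

lemma norm_le_max_of_mem_segment {v w x : V₁} (hx : x ∈ segment ℝ w v) :
    ‖x‖ ≤ max ‖v‖ ‖w‖ := by
  obtain ⟨a, b, ha, hb, hab, rfl⟩ := hx
  calc ‖a • w + b • v‖ ≤ a * ‖w‖ + b * ‖v‖ := by
        refine (norm_add_le _ _).trans ?_
        simp [norm_smul, abs_of_nonneg ha, abs_of_nonneg hb, le_refl]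
    _ ≤ a * max ‖v‖ ‖w‖ + b * max ‖v‖ ‖w‖ := by
        gcongr
        · exact le_max_right _ _
        · exact le_max_left _ _
    _ = max ‖v‖ ‖w‖ := by rw [← add_mul, hab, one_mul]

lemma lemA {n : ℕ} {q C : ℝ} (hq : 0 ≤ q) (hC : 0 ≤ C) {φ : V₁ → V₂}
    (hd : Differentiable ℝ (iteratedFDeriv ℝ n φ))
    (h : ∀ x, ‖iteratedFDeriv ℝ (n + 1) φ x‖ ≤ C * (1 + ‖x‖) ^ q) (v w : V₁) :
    ‖iteratedFDeriv ℝ n φ v - iteratedFDeriv ℝ n φ w‖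
      ≤ C * (1 + max ‖v‖ ‖w‖) ^ q * ‖v - w‖ := by
  refine (convex_segment w v).norm_image_sub_le_of_norm_fderiv_le
    (fun x _ => hd x) (fun x hx => ?_)
    (left_mem_segment ℝ w v) (right_mem_segment ℝ w v)
  rw [norm_fderiv_iteratedFDeriv]
  refine (h x).trans (mul_le_mul_of_nonneg_left ?_ hC)
  exact Real.rpow_le_rpow (by positivity) (by linarith [norm_le_max_of_mem_segment hx]) hq

lemma lemB {n : ℕ} {q C : ℝ} (hq : 0 ≤ q) (hC : 0 ≤ C) {φ : V₁ → V₂}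
    (hd : Differentiable ℝ (iteratedFDeriv ℝ n φ))
    (h : ∀ v w : V₁, ‖iteratedFDeriv ℝ n φ v - iteratedFDeriv ℝ n φ w‖
      ≤ C * (1 + max ‖v‖ ‖w‖) ^ q * ‖v - w‖) (v : V₁) :
    ‖iteratedFDeriv ℝ (n + 1) φ v‖ ≤ C * (1 + ‖v‖) ^ q := by
  rw [← norm_fderiv_iteratedFDeriv]
  have key : ∀ ε : ℝ, 0 < ε →
      ‖fderiv ℝ (iteratedFDeriv ℝ n φ) v‖ ≤ C * (1 + ‖v‖ + ε) ^ q := by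
    intro ε hε
    refine (hd v).hasFDerivAt.le_of_lip' (by positivity) ?_
    filter_upwards [Metric.ball_mem_nhds v hε] with w hw
    refine (h w v).trans (mul_le_mul_of_nonneg_right
      (mul_le_mul_of_nonneg_left ?_ hC) (norm_nonneg _))
    refine Real.rpow_le_rpow (by positivity) ?_ hq
    have hwv := mem_ball_iff_norm.mp hw
    have h1 : ‖w‖ ≤ ‖v‖ + ε := by
      calc ‖w‖ ≤ ‖v‖ + ‖w - v‖ := by
            simpa using norm_add_le v (w - v)
        _ ≤ ‖v‖ + ε := by linarith
    have h2 : max ‖w‖ ‖v‖ ≤ ‖v‖ + ε := max_le h1 (by linarith)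
    linarith
  have hcont : Tendsto (fun ε : ℝ => C * (1 + ‖v‖ + ε) ^ q) (𝓝[>] (0:ℝ))
      (𝓝 (C * (1 + ‖v‖) ^ q)) := by
    have : ContinuousAt (fun ε : ℝ => C * (1 + ‖v‖ + ε) ^ q) 0 := by
      refine ContinuousAt.mul continuousAt_const ?_
      have hb : ContinuousAt (fun ε : ℝ => 1 + ‖v‖ + ε) 0 := by fun_prop
      have hr : ContinuousAt (fun x : ℝ => x ^ q) (1 + ‖v‖ + 0) :=
        Real.continuousAt_rpow_const _ _ (Or.inl (by positivity))
      exact hr.comp hb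
    simpa using this.continuousWithinAt.tendsto
  exact ge_of_tendsto hcont (eventually_nhdsWithin_of_forall fun ε hε => key ε hε)

end Aux

section Glue
lemma glue2 {V : Type*} [NormedAddCommGroup V] (a : V) (L : ℝ≥0∞) (b : ℝ)
    (h : ‖a‖ ≤ L.toReal * b) : (‖a‖₊ : ℝ≥0∞) / ENNReal.ofReal b ≤ L := by
  refine ENNReal.div_le_of_le_mul ?_
  calc (‖a‖₊ : ℝ≥0∞) = ENNReal.ofReal ‖a‖ := (ofReal_norm _).symm
    _ ≤ ENNReal.ofReal (L.toReal * b) := ENNReal.ofReal_le_ofReal h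
    _ = ENNReal.ofReal L.toReal * ENNReal.ofReal b :=
        ENNReal.ofReal_mul ENNReal.toReal_nonneg
    _ ≤ L * ENNReal.ofReal b := mul_le_mul_left ENNReal.ofReal_toReal_le _

lemma glue1 {V : Type*} [NormedAddCommGroup V] (a : V) (L : ℝ≥0∞) (hL : L ≠ ⊤) (b : ℝ)
    (hb : 0 < b) (h : (‖a‖₊ : ℝ≥0∞) / ENNReal.ofReal b ≤ L) : ‖a‖ ≤ L.toReal * b := by
  rw [ENNReal.div_le_iff (ENNReal.ofReal_pos.mpr hb).ne' ENNReal.ofReal_ne_top] at h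
  rw [← ENNReal.ofReal_le_ofReal_iff (by positivity),
    ENNReal.ofReal_mul ENNReal.toReal_nonneg, ofReal_norm,
    ENNReal.ofReal_toReal hL]
  exact h
end Glue

theorem Gnorm_eq_LipNorm' {V₁ V₂ : Type*}
    [NormedAddCommGroup V₁] [NormedSpace ℝ V₁] [CompleteSpace V₁]
    [NormedAddCommGroup V₂] [NormedSpace ℝ V₂] [CompleteSpace V₂]
    (n : ℕ) (q : ℝ) (hq : 0 ≤ q)
    (φ : V₁ → V₂) (hφ : ContDiff ℝ (n + 1) φ) :
      (⨆ v : V₁, (‖iteratedFDeriv ℝ (n + 1) φ v‖₊ : ℝ≥0∞) / ENNReal.ofReal ((1 + ‖v‖) ^ q)) =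
        ⨆ (v : V₁) (w : V₁) (_ : v ≠ w),
          (‖iteratedFDeriv ℝ n φ v - iteratedFDeriv ℝ n φ w‖₊ : ℝ≥0∞) /
            ENNReal.ofReal ((1 + max ‖v‖ ‖w‖) ^ q * ‖v - w‖) := by
  have hd : Differentiable ℝ (iteratedFDeriv ℝ n φ) :=
    hφ.differentiable_iteratedFDeriv (by exact_mod_cast Nat.lt_succ_self n)
  apply le_antisymm
  · refine iSup_le fun v => ?_
    set L : ℝ≥0∞ := ⨆ (v : V₁) (w : V₁) (_ : v ≠ w),
          (‖iteratedFDeriv ℝ n φ v - iteratedFDeriv ℝ n φ w‖₊ : ℝ≥0∞) /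
            ENNReal.ofReal ((1 + max ‖v‖ ‖w‖) ^ q * ‖v - w‖) with hLdef
    by_cases hL : L = ⊤
    · rw [hL]; exact le_top
    have hreal : ∀ a b : V₁, ‖iteratedFDeriv ℝ n φ a - iteratedFDeriv ℝ n φ b‖
        ≤ L.toReal * (1 + max ‖a‖ ‖b‖) ^ q * ‖a - b‖ := by
      intro a b
      rcases eq_or_ne a b with rfl | hab
      · simp
      have hnab : (0:ℝ) < ‖a - b‖ := by
        rw [norm_pos_iff]; exact sub_ne_zero.mpr hab
      have h1 : (‖iteratedFDeriv ℝ n φ a - iteratedFDeriv ℝ n φ b‖₊ : ℝ≥0∞) /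
            ENNReal.ofReal ((1 + max ‖a‖ ‖b‖) ^ q * ‖a - b‖) ≤ L := by
        rw [hLdef]
        exact le_iSup₂_of_le a b (le_iSup_of_le hab le_rfl)
      rw [mul_assoc]
      exact glue1 _ L hL _ (by positivity) h1
    have hB := lemB hq ENNReal.toReal_nonneg hd hreal v
    exact glue2 _ L _ hB
  · refine iSup_le fun v => iSup_le fun w => iSup_le fun hvw => ?_
    set S : ℝ≥0∞ := ⨆ v : V₁,
        (‖iteratedFDeriv ℝ (n + 1) φ v‖₊ : ℝ≥0∞) / ENNReal.ofReal ((1 + ‖v‖) ^ q) with hSdef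
    by_cases hS : S = ⊤
    · rw [hS]; exact le_top
    have hreal : ∀ x : V₁, ‖iteratedFDeriv ℝ (n + 1) φ x‖ ≤ S.toReal * (1 + ‖x‖) ^ q := by
      intro x
      have h1 : (‖iteratedFDeriv ℝ (n + 1) φ x‖₊ : ℝ≥0∞) /
          ENNReal.ofReal ((1 + ‖x‖) ^ q) ≤ S := by
        rw [hSdef]
        exact le_iSup (fun y : V₁ => (‖iteratedFDeriv ℝ (n + 1) φ y‖₊ : ℝ≥0∞) /
          ENNReal.ofReal ((1 + ‖y‖) ^ q)) x
      simpa using glue1 _ S hS _ (by positivity) h1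
    have hA := lemA hq ENNReal.toReal_nonneg hd hreal v w
    refine glue2 _ S _ ?_
    rw [← mul_assoc]
    exact hA


/-- **Coincidence of the `G`-norm and the `Lip`-norm of top order**: for `m ≥ 1`, `q ≥ 0`
and `φ ∈ C^m(V₁,V₂)`, `‖φ‖_{G^m_q} = ‖φ‖_{Lip^m_q}`; equivalently, the weighted supremum of
`‖φ^{(m)}‖` coincides with the weighted Lipschitz constant of `φ^{(m−1)}`. -/
theorem Gnorm_eq_LipNorm {V₁ V₂ : Type*}
    [NormedAddCommGroup V₁] [NormedSpace ℝ V₁] [CompleteSpace V₁]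
    [NormedAddCommGroup V₂] [NormedSpace ℝ V₂] [CompleteSpace V₂]
    (m : ℕ) (hm : 1 ≤ m) (q : ℝ) (hq : 0 ≤ q)
    (φ : V₁ → V₂) (hφ : ContDiff ℝ m φ) :
    Gnorm m q φ = LipNorm (m - 1) q φ ∧
      (⨆ v : V₁, (‖iteratedFDeriv ℝ m φ v‖₊ : ℝ≥0∞) / ENNReal.ofReal ((1 + ‖v‖) ^ q)) =
        ⨆ (v : V₁) (w : V₁) (_ : v ≠ w),
          (‖iteratedFDeriv ℝ (m - 1) φ v - iteratedFDeriv ℝ (m - 1) φ w‖₊ : ℝ≥0∞) /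
            ENNReal.ofReal ((1 + max ‖v‖ ‖w‖) ^ q * ‖v - w‖) := by
  obtain ⟨n, rfl⟩ : ∃ n, m = n + 1 := ⟨m - 1, (Nat.succ_pred_eq_of_pos hm).symm⟩
  have key := Gnorm_eq_LipNorm' n q hq φ hφ
  exact ⟨congrArg₂ (· + ·) rfl key, key⟩
end

section
/- Continuous embeddings G^{n+1}_q ⊆ Lip^{n+1}_q ⊆ G^n_{q+1} with constant 1: for all real Banach spaces V₁, V₂, every integer n ≥ 0 and every q ∈ [0,∞): (i) for every φ ∈ Cⁿ(V₁,V₂) one has ‖φ‖_{G^n_{q+1}(V₁,V₂)} ≤ ‖φ‖_{Lip^{n+1}_q(V₁,V₂)}; and (ii) for every φ ∈ C^{n+1}(V₁,V₂) one has ‖φ‖_{Lip^{n+1}_q(V₁,V₂)} ≤ ‖φ‖_{G^{n+1}_q(V₁,V₂)} (inequalities in [0,∞]). In particular G^{n+1}_q(V₁,V₂) ⊆ Lip^{n+1}_q(V₁,V₂) ⊆ G^n_{q+1}(V₁,V₂) with continuous inclusions. -/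
open scoped ENNReal NNReal

/-- Mean value estimate: if the `(n+1)`-st derivative grows at most like `M (1+‖u‖)^q`, then
the `n`-th derivative satisfies a corresponding weighted Lipschitz bound. -/
private lemma mvt_key {V₁ V₂ : Type*} [NormedAddCommGroup V₁] [NormedSpace ℝ V₁]
    [NormedAddCommGroup V₂] [NormedSpace ℝ V₂]
    (n : ℕ) (q : ℝ) (hq : 0 ≤ q) (φ : V₁ → V₂) (hφ : ContDiff ℝ (n + 1) φ)
    (M : ℝ) (hM : 0 ≤ M)
    (hb : ∀ u : V₁, ‖iteratedFDeriv ℝ (n + 1) φ u‖ ≤ M * (1 + ‖u‖) ^ q)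
    (v w : V₁) :
    ‖iteratedFDeriv ℝ n φ v - iteratedFDeriv ℝ n φ w‖ ≤
      M * (1 + max ‖v‖ ‖w‖) ^ q * ‖v - w‖ := by
  set R := max ‖v‖ ‖w‖ with hR
  have hR0 : 0 ≤ R := le_trans (norm_nonneg v) (le_max_left _ _)
  have hdiff : Differentiable ℝ (iteratedFDeriv ℝ n φ) :=
    hφ.differentiable_iteratedFDeriv (by exact_mod_cast lt_add_one n)
  have hconv : Convex ℝ (Metric.closedBall (0 : V₁) R) := convex_closedBall _ _
  have hvmem : v ∈ Metric.closedBall (0 : V₁) R := by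
    simp [Metric.mem_closedBall, dist_zero_right, hR, le_max_left]
  have hwmem : w ∈ Metric.closedBall (0 : V₁) R := by
    simp [Metric.mem_closedBall, dist_zero_right, hR, le_max_right]
  have key := hconv.norm_image_sub_le_of_norm_fderiv_le
    (f := iteratedFDeriv ℝ n φ) (C := M * (1 + R) ^ q)
    (fun u _ => hdiff.differentiableAt)
    (fun u hu => by
      rw [norm_fderiv_iteratedFDeriv]
      refine (hb u).trans ?_
      have hu' : ‖u‖ ≤ R := by simpa [dist_zero_right] using hu
      have : (1 + ‖u‖) ^ q ≤ (1 + R) ^ q :=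
        Real.rpow_le_rpow (by positivity) (by linarith) hq
      exact mul_le_mul_of_nonneg_left this hM)
    hwmem hvmem
  exact key

/-- **Continuous embeddings `G^{n+1}_q ⊆ Lip^{n+1}_q ⊆ G^n_{q+1}` with constant 1**:
(i) `‖φ‖_{G^n_{q+1}} ≤ ‖φ‖_{Lip^{n+1}_q}` for `φ ∈ Cⁿ`; (ii) `‖φ‖_{Lip^{n+1}_q} ≤ ‖φ‖_{G^{n+1}_q}`
for `φ ∈ C^{n+1}`; in particular the corresponding sets are nested. -/
theorem Lip_between_G {V₁ V₂ : Type*}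
    [NormedAddCommGroup V₁] [NormedSpace ℝ V₁] [CompleteSpace V₁]
    [NormedAddCommGroup V₂] [NormedSpace ℝ V₂] [CompleteSpace V₂]
    (n : ℕ) (q : ℝ) (hq : 0 ≤ q) :
    (∀ φ : V₁ → V₂, ContDiff ℝ n φ → Gnorm n (q + 1) φ ≤ LipNorm n q φ) ∧
    (∀ φ : V₁ → V₂, ContDiff ℝ (n + 1) φ → LipNorm n q φ ≤ Gnorm (n + 1) q φ) ∧
    {φ : V₁ → V₂ | ContDiff ℝ (n + 1) φ ∧ Gnorm (n + 1) q φ < ⊤} ⊆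
      {φ : V₁ → V₂ | ContDiff ℝ n φ ∧ LipNorm n q φ < ⊤} ∧
    {φ : V₁ → V₂ | ContDiff ℝ n φ ∧ LipNorm n q φ < ⊤} ⊆
      {φ : V₁ → V₂ | ContDiff ℝ n φ ∧ Gnorm n (q + 1) φ < ⊤} := by
  have part1 : ∀ φ : V₁ → V₂, ContDiff ℝ n φ → Gnorm n (q + 1) φ ≤ LipNorm n q φ := by
    intro φ _
    set g := iteratedFDeriv ℝ n φ with hg
    set b : ℝ≥0∞ := (‖g 0‖₊ : ℝ≥0∞) with hb
    set T := ⨆ (v : V₁) (w : V₁) (_ : v ≠ w),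
        (‖g v - g w‖₊ : ℝ≥0∞) / ENNReal.ofReal ((1 + max ‖v‖ ‖w‖) ^ q * ‖v - w‖) with hT
    have hsup : (⨆ v : V₁, (‖g v‖₊ : ℝ≥0∞) / ENNReal.ofReal ((1 + ‖v‖) ^ (q + 1))) ≤ b + T := by
      refine iSup_le fun v => ?_
      by_cases hv : v = 0
      · subst hv
        simp only [norm_zero, add_zero, Real.one_rpow, ENNReal.ofReal_one, div_one]
        exact le_add_right le_rfl
      · have hnv : 0 < ‖v‖ := norm_pos_iff.2 hv
        have hrpos : 0 < (1 + ‖v‖) ^ q := Real.rpow_pos_of_pos (by linarith) q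
        set d : ℝ≥0∞ := ENNReal.ofReal ((1 + ‖v‖) ^ q * ‖v‖) with hd
        set D : ℝ≥0∞ := ENNReal.ofReal ((1 + ‖v‖) ^ (q + 1)) with hD
        have hd0 : d ≠ 0 := by
          simp only [hd, ne_eq, ENNReal.ofReal_eq_zero, not_le]
          positivity
        have hdtop : d ≠ ⊤ := ENNReal.ofReal_ne_top
        have hdD : d ≤ D := by
          refine ENNReal.ofReal_le_ofReal ?_
          rw [Real.rpow_add_one (by positivity : (1:ℝ) + ‖v‖ ≠ 0)]
          exact mul_le_mul_of_nonneg_left (by linarith) (le_of_lt hrpos)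
        have hD1 : (1 : ℝ≥0∞) ≤ D := by
          rw [hD, ← ENNReal.ofReal_one]
          exact ENNReal.ofReal_le_ofReal (Real.one_le_rpow (by linarith) (by linarith))
        have hterm : (‖g v - g 0‖₊ : ℝ≥0∞) / d ≤ T := by
          have h1 : (‖g v - g 0‖₊ : ℝ≥0∞) /
              ENNReal.ofReal ((1 + max ‖v‖ ‖(0 : V₁)‖) ^ q * ‖v - 0‖) ≤ T := by
            refine le_trans ?_ (le_iSup _ v)
            refine le_trans ?_ (le_iSup _ (0 : V₁))
            exact le_iSup (fun _ : v ≠ (0:V₁) => _) hv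
          simpa [hd, norm_zero, max_eq_left (norm_nonneg v), sub_zero] using h1
        have h2 : (‖g v - g 0‖₊ : ℝ≥0∞) ≤ T * d :=
          (ENNReal.div_le_iff_le_mul (Or.inl hd0) (Or.inl hdtop)).1 hterm
        have h3 : (‖g v‖₊ : ℝ≥0∞) ≤ b + T * d := by
          refine le_trans ?_ (add_le_add_right h2 b)
          have htr : ‖g v‖₊ ≤ ‖g 0‖₊ + ‖g v - g 0‖₊ := by
            simpa using nnnorm_add_le (g 0) (g v - g 0)
          rw [hb]
          exact_mod_cast htr
        calc (‖g v‖₊ : ℝ≥0∞) / D ≤ (b + T * d) / D := ENNReal.div_le_div_right h3 D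
          _ = b / D + (T * d) / D := ENNReal.add_div
          _ ≤ b + T := by
              refine add_le_add ?_ ?_
              · exact ENNReal.div_le_of_le_mul (le_mul_of_one_le_right zero_le hD1)
              · exact ENNReal.div_le_of_le_mul (mul_le_mul_right hdD T)
    calc Gnorm n (q + 1) φ
        ≤ (∑ i ∈ Finset.range n, (‖iteratedFDeriv ℝ i φ 0‖₊ : ℝ≥0∞)) + (b + T) :=
          add_le_add_right hsup _
      _ = LipNorm n q φ := by
          rw [LipNorm, Finset.sum_range_succ, ← hg, ← hb, add_assoc]
  have part2 : ∀ φ : V₁ → V₂, ContDiff ℝ (n + 1) φ → LipNorm n q φ ≤ Gnorm (n + 1) q φ := by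
    intro φ hφ
    rw [LipNorm, Gnorm]
    refine add_le_add le_rfl ?_
    set S := ⨆ u : V₁, (‖iteratedFDeriv ℝ (n + 1) φ u‖₊ : ℝ≥0∞) /
      ENNReal.ofReal ((1 + ‖u‖) ^ q) with hS
    refine iSup_le fun v => iSup_le fun w => iSup_le fun hvw => ?_
    by_cases htop : S = ⊤
    · rw [htop]; exact le_top
    set M := S.toReal with hM
    have hM0 : 0 ≤ M := ENNReal.toReal_nonneg
    have hbound : ∀ u : V₁, ‖iteratedFDeriv ℝ (n + 1) φ u‖ ≤ M * (1 + ‖u‖) ^ q := by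
      intro u
      have hpos : 0 < (1 + ‖u‖) ^ q := Real.rpow_pos_of_pos (by positivity) q
      have h1 := le_iSup (fun u : V₁ => (‖iteratedFDeriv ℝ (n + 1) φ u‖₊ : ℝ≥0∞) /
          ENNReal.ofReal ((1 + ‖u‖) ^ q)) u
      rw [← hS] at h1
      have h2 : (‖iteratedFDeriv ℝ (n + 1) φ u‖₊ : ℝ≥0∞) ≤
          S * ENNReal.ofReal ((1 + ‖u‖) ^ q) :=
        (ENNReal.div_le_iff_le_mul
          (Or.inl (by simp [ENNReal.ofReal_eq_zero, not_le, hpos]))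
          (Or.inl ENNReal.ofReal_ne_top)).1 h1
      rw [← ENNReal.ofReal_toReal htop, ← ENNReal.ofReal_mul hM0,
        ← enorm_eq_nnnorm, ← ofReal_norm] at h2
      exact (ENNReal.ofReal_le_ofReal_iff (by positivity)).1 h2
    have hkey := mvt_key n q hq φ hφ M hM0 hbound v w
    refine ENNReal.div_le_of_le_mul ?_
    rw [← ENNReal.ofReal_toReal htop, ← hM, ← enorm_eq_nnnorm, ← ofReal_norm,
      ← ENNReal.ofReal_mul hM0]
    exact ENNReal.ofReal_le_ofReal (by rw [← mul_assoc]; exact hkey)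
  refine ⟨part1, part2, ?_, ?_⟩
  · intro φ hφ
    have hn : ContDiff ℝ n φ := hφ.1.of_le (by exact_mod_cast Nat.le_succ n)
    exact ⟨hn, lt_of_le_of_lt (part2 φ hφ.1) hφ.2⟩
  · intro φ hφ
    exact ⟨hφ.1, lt_of_le_of_lt (part1 φ hφ.1) hφ.2⟩
end

section
/- Completeness of G^n_q: for all real Banach spaces V₁, V₂, every integer n ≥ 0 and every q ∈ [0,∞), the normed space (G^n_q(V₁,V₂), ‖·‖_{G^n_q(V₁,V₂)}) is complete; i.e., for every sequence (φ_m)_{m∈ℕ} in G^n_q(V₁,V₂) with lim_{m,l→∞} ‖φ_m − φ_l‖_{G^n_q(V₁,V₂)} = 0 there exists φ ∈ G^n_q(V₁,V₂) with lim_{m→∞} ‖φ_m − φ‖_{G^n_q(V₁,V₂)} = 0. -/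
open Filter
open scoped ENNReal NNReal Topology

open Metric

set_option linter.unusedSectionVars false
set_option maxHeartbeats 1000000

section helpers
variable {V₁ V₂ : Type*} [NormedAddCommGroup V₁] [NormedSpace ℝ V₁]
  [NormedAddCommGroup V₂] [NormedSpace ℝ V₂]

lemma Gaux_wpos (q : ℝ) (v : V₁) : 0 < (1 + ‖v‖) ^ q :=
  Real.rpow_pos_of_pos (by positivity) q

lemma Gaux_sup_le_iff {n : ℕ} {q : ℝ} {g : V₁ → V₂} {b : ℝ} (hb : 0 ≤ b) :
    (⨆ v : V₁, (‖iteratedFDeriv ℝ n g v‖₊ : ℝ≥0∞) / ENNReal.ofReal ((1 + ‖v‖) ^ q))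
      ≤ ENNReal.ofReal b ↔ ∀ v, ‖iteratedFDeriv ℝ n g v‖ ≤ b * (1 + ‖v‖) ^ q := by
  rw [iSup_le_iff]
  refine forall_congr' fun v => ?_
  rw [ENNReal.div_le_iff (by simp [ENNReal.ofReal_eq_zero, not_le, Gaux_wpos q v])
      ENNReal.ofReal_ne_top, ← ENNReal.ofReal_mul hb, ← enorm_eq_nnnorm, ← ofReal_norm,
      ENNReal.ofReal_le_ofReal_iff (mul_nonneg hb (Gaux_wpos q v).le)]

lemma Gnorm_le {n : ℕ} {q : ℝ} {g : V₁ → V₂} {a b : ℝ} (hb : 0 ≤ b)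
    (h0 : ∀ i < n, ‖iteratedFDeriv ℝ i g 0‖ ≤ a)
    (hn : ∀ v, ‖iteratedFDeriv ℝ n g v‖ ≤ b * (1 + ‖v‖) ^ q) :
    Gnorm n q g ≤ n * ENNReal.ofReal a + ENNReal.ofReal b := by
  refine add_le_add ?_ ((Gaux_sup_le_iff hb).2 hn)
  calc (∑ i ∈ Finset.range n, (‖iteratedFDeriv ℝ i g 0‖₊ : ℝ≥0∞))
      ≤ ∑ _i ∈ Finset.range n, ENNReal.ofReal a := by
        refine Finset.sum_le_sum fun i hi => ?_
        rw [← enorm_eq_nnnorm, ← ofReal_norm]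
        exact ENNReal.ofReal_le_ofReal (h0 i (Finset.mem_range.1 hi))
    _ = n * ENNReal.ofReal a := by simp [Finset.sum_const, nsmul_eq_mul]

lemma Gnorm_bounds {n : ℕ} {q : ℝ} {g : V₁ → V₂} {ε : ℝ} (hε : 0 ≤ ε)
    (h : Gnorm n q g ≤ ENNReal.ofReal ε) :
    (∀ i < n, ‖iteratedFDeriv ℝ i g 0‖ ≤ ε) ∧
      ∀ v, ‖iteratedFDeriv ℝ n g v‖ ≤ ε * (1 + ‖v‖) ^ q := by
  constructor
  · intro i hi
    have h1 : (‖iteratedFDeriv ℝ i g 0‖₊ : ℝ≥0∞) ≤ ENNReal.ofReal ε :=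
      ((Finset.single_le_sum (fun j _ => zero_le) (Finset.mem_range.2 hi)).trans
        le_self_add).trans h
    rw [← enorm_eq_nnnorm, ← ofReal_norm, ENNReal.ofReal_le_ofReal_iff hε] at h1
    exact h1
  · exact (Gaux_sup_le_iff hε).1 (le_add_self.trans h)

lemma iteratedFDeriv_sub_apply'' {i : ℕ} {f g : V₁ → V₂} (hf : ContDiff ℝ i f)
    (hg : ContDiff ℝ i g) (x : V₁) :
    iteratedFDeriv ℝ i (f - g) x = iteratedFDeriv ℝ i f x - iteratedFDeriv ℝ i g x := by
  have hng : ContDiff ℝ i (-g) := hg.neg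
  rw [sub_eq_add_neg f g, iteratedFDeriv_add_apply hf.contDiffAt hng.contDiffAt, iteratedFDeriv_neg_apply,
    sub_eq_add_neg]

lemma Gaux_growth {n : ℕ} {q ε : ℝ} (hq : 0 ≤ q) (hε : 0 ≤ ε) {g : V₁ → V₂}
    (hg : ContDiff ℝ n g)
    (h0 : ∀ i < n, ‖iteratedFDeriv ℝ i g 0‖ ≤ ε)
    (hn : ∀ v, ‖iteratedFDeriv ℝ n g v‖ ≤ ε * (1 + ‖v‖) ^ q) :
    ∀ i ≤ n, ∀ v : V₁, ‖iteratedFDeriv ℝ i g v‖ ≤ ε * (1 + ‖v‖) ^ (q + (n - i : ℕ)) := by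
  suffices H : ∀ d i, i + d = n → ∀ v : V₁,
      ‖iteratedFDeriv ℝ i g v‖ ≤ ε * (1 + ‖v‖) ^ (q + (d : ℕ)) by
    intro i hi v
    have h := H (n - i) i (by omega) v
    exact h
  intro d
  induction d with
  | zero =>
    intro i hi v
    have : i = n := by omega
    subst this
    simpa using hn v
  | succ d ih =>
    intro i hin v
    have hBpos : (0:ℝ) < (1 + ‖v‖) ^ (q + (d : ℕ)) := Gaux_wpos _ v
    have hB1 : (1:ℝ) ≤ (1 + ‖v‖) ^ (q + (d : ℕ)) :=
      Real.one_le_rpow (by linarith [norm_nonneg v]) (by positivity)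
    have hdiff : Differentiable ℝ (iteratedFDeriv ℝ i g) :=
      hg.differentiable_iteratedFDeriv (by exact_mod_cast (by omega : i < n))
    have hmvt := (convex_closedBall (0:V₁) ‖v‖).norm_image_sub_le_of_norm_fderiv_le
      (f := iteratedFDeriv ℝ i g) (C := ε * (1 + ‖v‖) ^ (q + (d : ℕ)))
      (fun x _ => hdiff x)
      (fun w hw => by
        rw [norm_fderiv_iteratedFDeriv]
        refine (ih (i+1) (by omega) w).trans ?_
        have hw' : ‖w‖ ≤ ‖v‖ := by simpa using hw
        exact mul_le_mul_of_nonneg_left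
          (Real.rpow_le_rpow (by positivity) (by linarith) (by positivity)) hε)
      (Metric.mem_closedBall_self (norm_nonneg v))
      (mem_closedBall_zero_iff.2 le_rfl)
    have h1 : ‖iteratedFDeriv ℝ i g v‖ ≤ ‖iteratedFDeriv ℝ i g 0‖
        + ‖iteratedFDeriv ℝ i g v - iteratedFDeriv ℝ i g 0‖ := norm_le_insert' _ _
    have h2 : ‖iteratedFDeriv ℝ i g 0‖ ≤ ε := h0 i (by omega)
    have h3 : ‖iteratedFDeriv ℝ i g v - iteratedFDeriv ℝ i g 0‖
        ≤ ε * (1 + ‖v‖) ^ (q + (d : ℕ)) * ‖v‖ := by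
      simpa using hmvt
    have hexp : q + ((d + 1 : ℕ) : ℝ) = (q + (d : ℕ)) + 1 := by push_cast; ring
    rw [hexp, Real.rpow_add_one (by positivity)]
    nlinarith [norm_nonneg v, hB1, hBpos, h1, h2, h3, hε]
end helpers

/-- **Completeness of `G^n_q`**: every sequence in
`G^n_q(V₁,V₂) = {φ ∈ Cⁿ : ‖φ‖_{G^n_q} < ∞}` which is Cauchy with respect to
`‖·‖_{G^n_q}` (i.e. `lim_{m,l→∞} ‖φ_m − φ_l‖_{G^n_q} = 0`) converges in the
`‖·‖_{G^n_q}`-sense to some element of `G^n_q(V₁,V₂)`. -/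
theorem Gnorm_complete {V₁ V₂ : Type*}
    [NormedAddCommGroup V₁] [NormedSpace ℝ V₁] [CompleteSpace V₁]
    [NormedAddCommGroup V₂] [NormedSpace ℝ V₂] [CompleteSpace V₂]
    (n : ℕ) (q : ℝ) (hq : 0 ≤ q)
    (φ : ℕ → V₁ → V₂)
    (hmem : ∀ m : ℕ, ContDiff ℝ n (φ m) ∧ Gnorm n q (φ m) < ⊤)
    (hcauchy : Tendsto (fun p : ℕ × ℕ => Gnorm n q (φ p.1 - φ p.2)) atTop (𝓝 0)) :
    ∃ ψ : V₁ → V₂, ContDiff ℝ n ψ ∧ Gnorm n q ψ < ⊤ ∧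
      Tendsto (fun m : ℕ => Gnorm n q (φ m - ψ)) atTop (𝓝 0) := by
  classical
  -- Step 1: quantitative Cauchy estimates for all derivatives
  have key : ∀ δ : ℝ, 0 < δ → ∃ N : ℕ, ∀ m l, N ≤ m → N ≤ l → ∀ i ≤ n, ∀ v : V₁,
      ‖iteratedFDeriv ℝ i (φ m) v - iteratedFDeriv ℝ i (φ l) v‖
        ≤ δ * (1 + ‖v‖) ^ (q + (n - i : ℕ)) := by
    intro δ hδ
    obtain ⟨N, hN⟩ := (ENNReal.tendsto_atTop_zero.1 hcauchy) (ENNReal.ofReal δ) (by simp [hδ])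
    refine ⟨max N.1 N.2, fun m l hm hl i hi v => ?_⟩
    have hml : Gnorm n q (φ m - φ l) ≤ ENNReal.ofReal δ :=
      hN (m, l) ⟨(le_max_left _ _).trans hm, (le_max_right _ _).trans hl⟩
    have hsub : ContDiff ℝ n (φ m - φ l) := (hmem m).1.sub (hmem l).1
    have hb := Gnorm_bounds hδ.le hml
    have hgr := Gaux_growth hq hδ.le hsub hb.1 hb.2 i hi v
    rwa [iteratedFDeriv_sub_apply''
      ((hmem m).1.of_le (by exact_mod_cast hi)) ((hmem l).1.of_le (by exact_mod_cast hi))] at hgr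
  -- Step 2: pointwise limits
  have hcau : ∀ i ≤ n, ∀ v : V₁, CauchySeq (fun m => iteratedFDeriv ℝ i (φ m) v) := by
    intro i hi v
    rw [Metric.cauchySeq_iff]
    intro ε hε
    set D := (1 + ‖v‖) ^ (q + (n - i : ℕ)) with hD
    have hDpos : 0 < D := Gaux_wpos _ v
    obtain ⟨N, hN⟩ := key (ε / (2 * D)) (by positivity)
    refine ⟨N, fun m hm l hl => ?_⟩
    rw [dist_eq_norm]
    calc ‖iteratedFDeriv ℝ i (φ m) v - iteratedFDeriv ℝ i (φ l) v‖
        ≤ ε / (2 * D) * D := hN m l hm hl i hi v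
      _ = ε / 2 := by field_simp
      _ < ε := by linarith
  have hlim : ∀ i ≤ n, ∀ v : V₁, Tendsto (fun m => iteratedFDeriv ℝ i (φ m) v) atTop
      (𝓝 (limUnder atTop (fun m => iteratedFDeriv ℝ i (φ m) v))) :=
    fun i hi v => (hcau i hi v).tendsto_limUnder
  set F : ∀ i : ℕ, V₁ → ContinuousMultilinearMap ℝ (fun _ : Fin i => V₁) V₂ :=
    fun i v => limUnder atTop (fun m => iteratedFDeriv ℝ i (φ m) v) with hF
  -- Step 3: error bounds to the limit
  have herr : ∀ δ : ℝ, 0 < δ → ∃ N : ℕ, ∀ m, N ≤ m → ∀ i ≤ n, ∀ v : V₁,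
      ‖iteratedFDeriv ℝ i (φ m) v - F i v‖ ≤ δ * (1 + ‖v‖) ^ (q + (n - i : ℕ)) := by
    intro δ hδ
    obtain ⟨N, hN⟩ := key δ hδ
    refine ⟨N, fun m hm i hi v => ?_⟩
    have ht : Tendsto (fun l => ‖iteratedFDeriv ℝ i (φ m) v - iteratedFDeriv ℝ i (φ l) v‖)
        atTop (𝓝 ‖iteratedFDeriv ℝ i (φ m) v - F i v‖) :=
      (tendsto_const_nhds.sub (hlim i hi v)).norm
    exact le_of_tendsto ht (eventually_atTop.2 ⟨N, fun l hl => hN m l hm hl i hi v⟩)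
  -- Step 4: uniform convergence on balls
  have hunif : ∀ i ≤ n, ∀ R : ℝ, 0 < R →
      TendstoUniformlyOn (fun m v => iteratedFDeriv ℝ i (φ m) v) (F i) atTop (ball (0:V₁) R) := by
    intro i hi R hR
    rw [Metric.tendstoUniformlyOn_iff]
    intro ε hε
    set D := (1 + R) ^ (q + (n : ℕ)) with hDdef
    have hDpos : 0 < D := Real.rpow_pos_of_pos (by linarith) _
    obtain ⟨N, hN⟩ := herr (ε / (2 * D)) (by positivity)
    refine eventually_atTop.2 ⟨N, fun m hm v hv => ?_⟩
    have h1 := hN m hm i hi v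
    have hvR : ‖v‖ ≤ R := (mem_ball_zero_iff.1 hv).le
    have h2 : (1 + ‖v‖) ^ (q + (n - i : ℕ)) ≤ D := by
      calc (1 + ‖v‖) ^ (q + (n - i : ℕ))
          ≤ (1 + R) ^ (q + (n - i : ℕ)) :=
            Real.rpow_le_rpow (by positivity) (by linarith) (by positivity)
        _ ≤ D := Real.rpow_le_rpow_of_exponent_le (by linarith)
            (add_le_add le_rfl (Nat.cast_le.2 (Nat.sub_le n i)))
    rw [dist_eq_norm, norm_sub_rev]
    calc ‖iteratedFDeriv ℝ i (φ m) v - F i v‖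
        ≤ ε / (2 * D) * (1 + ‖v‖) ^ (q + (n - i : ℕ)) := h1
      _ ≤ ε / (2 * D) * D := by
          exact mul_le_mul_of_nonneg_left h2 (by positivity)
      _ = ε / 2 := by field_simp
      _ < ε := by linarith
  -- Taylor series of each φ m
  have htaylor : ∀ m : ℕ, HasFTaylorSeriesUpTo (n : ℕ∞) (φ m) (ftaylorSeries ℝ (φ m)) :=
    fun m => contDiff_iff_ftaylorSeries.mp (by exact_mod_cast (hmem m).1)
  -- Step 5: the limit function and its Taylor series
  set p : V₁ → FormalMultilinearSeries ℝ V₁ V₂ := fun v i => F i v with hp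
  set ψ : V₁ → V₂ := fun v => (F 0 v).curry0 with hψdef
  have hTaylor : HasFTaylorSeriesUpTo (n : ℕ∞) ψ p := by
    constructor
    · intro x; rfl
    · intro i hi x
      have hi' : i < n := by exact_mod_cast hi
      have hin : i + 1 ≤ n := hi'
      have hx : x ∈ ball (0:V₁) (‖x‖ + 1) := mem_ball_zero_iff.2 (by linarith [norm_nonneg x])
      refine hasFDerivAt_of_tendstoUniformlyOn (l := (atTop : Filter ℕ)) isOpen_ball
        (f := fun m v => iteratedFDeriv ℝ i (φ m) v)
        (f' := fun m v => (iteratedFDeriv ℝ (i+1) (φ m) v).curryLeft)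
        (g' := fun v => (F (i+1) v).curryLeft)
        ?_ ?_ ?_ hx
      · -- uniform convergence of derivatives
        rw [Metric.tendstoUniformlyOn_iff]
        intro ε hε
        have := Metric.tendstoUniformlyOn_iff.1
          (hunif (i+1) hin (‖x‖ + 1) (by positivity)) ε hε
        filter_upwards [this] with m hm v hv
        have hdist : dist ((F (i+1) v).curryLeft)
            ((iteratedFDeriv ℝ (i+1) (φ m) v).curryLeft)
            = dist (F (i+1) v) (iteratedFDeriv ℝ (i+1) (φ m) v) :=
          (continuousMultilinearCurryLeftEquiv ℝ (fun _ : Fin (i+1) => V₁) V₂).dist_map _ _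
        exact hdist.trans_lt (hm v hv)
      · intro m v _
        exact (htaylor m).fderiv i (by exact_mod_cast hi') v
      · intro v _
        exact hlim i hi'.le v
    · intro i hi
      have hi' : i ≤ n := by exact_mod_cast hi
      rw [continuous_iff_continuousAt]
      intro x
      have hcont : ContinuousOn (F i) (ball (0:V₁) (‖x‖ + 1)) :=
        (hunif i hi' _ (by positivity)).continuousOn
          (Frequently.of_forall fun m =>
            ((hmem m).1.continuous_iteratedFDeriv (by exact_mod_cast hi')).continuousOn)
      exact hcont.continuousAt (isOpen_ball.mem_nhds (mem_ball_zero_iff.2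
        (by linarith [norm_nonneg x])))
  have hψ : ContDiff ℝ n ψ := by exact_mod_cast hTaylor.contDiff
  have hiter : ∀ i ≤ n, iteratedFDeriv ℝ i ψ = F i := by
    intro i hi
    funext v
    exact (hTaylor.eq_iteratedFDeriv (by exact_mod_cast hi) v).symm
  -- Step 6: bounds giving finiteness of Gnorm ψ
  obtain ⟨N₁, hN₁⟩ := herr 1 one_pos
  have hfin := (hmem N₁).2
  set C : ℝ := (Gnorm n q (φ N₁)).toReal with hC
  have hC0 : 0 ≤ C := ENNReal.toReal_nonneg
  have hCb := Gnorm_bounds hC0 (le_of_eq (ENNReal.ofReal_toReal hfin.ne).symm)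
  have hzero_exp : (1 + ‖(0:V₁)‖ : ℝ) = 1 := by simp
  have hψ0 : ∀ i < n, ‖iteratedFDeriv ℝ i ψ 0‖ ≤ C + 1 := by
    intro i hi
    rw [hiter i hi.le]
    have h1 := hN₁ N₁ le_rfl i hi.le 0
    have h2 : ‖iteratedFDeriv ℝ i (φ N₁) 0‖ ≤ C := hCb.1 i hi
    have h3 : ‖F i 0‖ ≤ ‖iteratedFDeriv ℝ i (φ N₁) 0‖ + ‖iteratedFDeriv ℝ i (φ N₁) 0 - F i 0‖ :=
      norm_le_insert _ _
    have h4 : (1 + ‖(0:V₁)‖ : ℝ) ^ (q + ((n - i : ℕ) : ℝ)) = 1 := by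
      rw [hzero_exp, Real.one_rpow]
    nlinarith [h1, h3]
  have hψn : ∀ v : V₁, ‖iteratedFDeriv ℝ n ψ v‖ ≤ (C + 1) * (1 + ‖v‖) ^ q := by
    intro v
    rw [hiter n le_rfl]
    have h1 := hN₁ N₁ le_rfl n le_rfl v
    have h4 : (q + ((n - n : ℕ) : ℝ)) = q := by simp
    rw [h4] at h1
    have h2 := hCb.2 v
    have h3 : ‖F n v‖ ≤ ‖iteratedFDeriv ℝ n (φ N₁) v‖ + ‖iteratedFDeriv ℝ n (φ N₁) v - F n v‖ :=
      norm_le_insert _ _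
    nlinarith [h1, h2, h3]
  have hGψ : Gnorm n q ψ < ⊤ := by
    refine lt_of_le_of_lt (Gnorm_le (by linarith) hψ0 hψn) ?_
    exact ENNReal.add_lt_top.2 ⟨ENNReal.mul_lt_top (by simp) ENNReal.ofReal_lt_top,
      ENNReal.ofReal_lt_top⟩
  refine ⟨ψ, hψ, hGψ, ?_⟩
  -- Step 7: convergence in Gnorm
  rw [ENNReal.tendsto_atTop_zero]
  intro ε hε
  rcases eq_or_ne ε ⊤ with rfl | htop
  · exact ⟨0, fun m _ => le_top⟩
  have hεR : 0 < ε.toReal := ENNReal.toReal_pos hε.ne' htop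
  set δ : ℝ := ε.toReal / (n + 1) with hδdef
  have hδ : 0 < δ := by positivity
  obtain ⟨N, hN⟩ := herr δ hδ
  refine ⟨N, fun m hm => ?_⟩
  have h0 : ∀ i < n, ‖iteratedFDeriv ℝ i (φ m - ψ) 0‖ ≤ δ := by
    intro i hi
    rw [iteratedFDeriv_sub_apply'' ((hmem m).1.of_le (by exact_mod_cast hi.le))
      (hψ.of_le (by exact_mod_cast hi.le)), hiter i hi.le]
    have h1 := hN m hm i hi.le 0
    have h4 : (1 + ‖(0:V₁)‖ : ℝ) ^ (q + ((n - i : ℕ) : ℝ)) = 1 := by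
      simp [Real.one_rpow]
    rw [h4, mul_one] at h1
    exact h1
  have hsup : ∀ v : V₁, ‖iteratedFDeriv ℝ n (φ m - ψ) v‖ ≤ δ * (1 + ‖v‖) ^ q := by
    intro v
    rw [iteratedFDeriv_sub_apply'' (hmem m).1 hψ, hiter n le_rfl]
    have h1 := hN m hm n le_rfl v
    have h4 : (q + ((n - n : ℕ) : ℝ)) = q := by simp
    rw [h4] at h1
    exact h1
  calc Gnorm n q (φ m - ψ) ≤ n * ENNReal.ofReal δ + ENNReal.ofReal δ :=
        Gnorm_le hδ.le h0 hsup
    _ = (n + 1) * ENNReal.ofReal δ := by ring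
    _ = ENNReal.ofReal ((n + 1) * δ) := by
        rw [ENNReal.ofReal_mul (by positivity)]
        congr 1
        rw [ENNReal.ofReal_add (by positivity) zero_le_one]
        simp [ENNReal.ofReal_natCast]
    _ = ENNReal.ofReal ε.toReal := by
        congr 1
        rw [hδdef]; field_simp
    _ = ε := ENNReal.ofReal_toReal htop
end
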